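/- arXiv:2404.14615 — 3 statements merged into one kernel-verified Lean document; each statement's English description precedes it below -/
import Mathlib

section
/- Let Γ₁ be a group, Γ₂ ⊴ Γ₁ normal of finite index, Δ = Γ₁/Γ₂, M an abelian group with Δ-action, and 𝓔 the ℤ[Δ]-module built from Γ₂^{ab}, I_Δ and the 2-cocycle κ. Then for every abelian group V there is an isomorphism of abelian groups Hom((𝓔 ⊗ M)_Δ, V) ≅ Z¹(Γ₁, Hom(M, V)), functorial in V, where Δ acts diagonally on 𝓔 ⊗ M and Γ₁ acts on Hom(M, V) by (γ·f)(m) = f(π(γ)^{-1}·m). -/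
/-!
STATEMENT 5.  For every abelian group V there is an isomorphism
Hom((𝓔 ⊗ M)_Δ, V) ≅ Z¹(Γ₁, Hom(M, V)), functorial in V, where Δ acts
diagonally on 𝓔 ⊗ M and Γ₁ acts on Hom(M,V) by (γ·f)(m) = f(π(γ)⁻¹·m).
-/

open scoped TensorProduct

section EModule

variable {Γ₁ Δ : Type} [Group Γ₁] [Group Δ]

/-- The augmentation map `ℤ[Δ] → ℤ` (sum of coefficients), with `ℤ[Δ]`
realized as `Δ →₀ ℤ`. -/
noncomputable def augmentation (Δ : Type) : (Δ →₀ ℤ) →+ ℤ :=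
  Finsupp.liftAddHom fun _ => AddMonoidHom.id ℤ

/-- The augmentation ideal `I_Δ ⊆ ℤ[Δ]`, as an additive subgroup. -/
noncomputable def augIdeal (Δ : Type) : AddSubgroup (Δ →₀ ℤ) := (augmentation Δ).ker

/-- The element `c − 1` of `I_Δ`. -/
noncomputable def aidElt [Group Δ] (c : Δ) : ↥(augIdeal Δ) :=
  ⟨Finsupp.single c 1 - Finsupp.single 1 1, by
    simp [augIdeal, AddMonoidHom.mem_ker, map_sub, augmentation,
      Finsupp.liftAddHom_apply_single]⟩

/-- The element `a − b` of `I_Δ`. -/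
noncomputable def aidElt2 [Group Δ] (a b : Δ) : ↥(augIdeal Δ) :=
  ⟨Finsupp.single a 1 - Finsupp.single b 1, by
    simp [augIdeal, AddMonoidHom.mem_ker, map_sub, augmentation,
      Finsupp.liftAddHom_apply_single]⟩

/-- The underlying abelian group `Γ₂^{ab} ⊕ I_Δ` of the ℤ[Δ]-module 𝓔
(with `Γ₂ = ker π` and `Γ₂^{ab}` its abelianization, written additively). -/
abbrev EMod (π : Γ₁ →* Δ) : Type :=
  Additive (Abelianization ↥π.ker) × ↥(augIdeal Δ)

/-- The Δ-action `d·[k] = [σ(d) k σ(d)⁻¹]` on `Γ₂^{ab}` (conjugation uses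
normality of `Γ₂ = ker π`). -/
noncomputable def conjAb (π : Γ₁ →* Δ) (σ : Δ → Γ₁) (d : Δ) :
    Abelianization ↥π.ker →* Abelianization ↥π.ker :=
  Abelianization.map (MulAut.conjNormal (σ d)).toMonoidHom

/-- The 2-cocycle `κ(d,c) = [σ(d)σ(c)σ(dc)⁻¹] ∈ Γ₂^{ab}`. -/
noncomputable def kappaE (π : Γ₁ →* Δ) (σ : Δ → Γ₁) (hσ : ∀ c, π (σ c) = c)
    (d c : Δ) : Abelianization ↥π.ker :=
  Abelianization.of ⟨σ d * σ c * (σ (d * c))⁻¹, by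
    have : π (σ d * σ c * (σ (d * c))⁻¹) = 1 := by
      rw [map_mul, map_mul, map_inv, hσ, hσ, hσ, mul_inv_cancel]
    simpa [MonoidHom.mem_ker] using this⟩

/-- The defining formula of the Δ-action on `𝓔 = Γ₂^{ab} ⊕ I_Δ`:
`d ∗ (g, c−1) = (d·g + κ(d,c), dc − d)`, extended ℤ-linearly.  (The elements
`(g, c−1)` generate `𝓔`, so this determines the action.) -/
def EActionFormula (π : Γ₁ →* Δ) (σ : Δ → Γ₁) (hσ : ∀ c, π (σ c) = c)
    [DistribMulAction Δ (EMod π)] : Prop :=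
  ∀ (d : Δ) (g : Abelianization ↥π.ker) (c : Δ),
    d • ((Additive.ofMul g, aidElt c) : EMod π) =
      (Additive.ofMul (conjAb π σ d g * kappaE π σ hσ d c), aidElt2 (d * c) d)

variable (M : Type) [AddCommGroup M] [DistribMulAction Δ M]

/-- `T = 𝓔 ⊗ M`. -/
abbrev TMod (π : Γ₁ →* Δ) : Type := (EMod π) ⊗[ℤ] M

/-- The diagonal action of `d ∈ Δ` on `𝓔 ⊗ M`. -/
noncomputable def diagT (π : Γ₁ →* Δ) [DistribMulAction Δ (EMod π)] (d : Δ) :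
    TMod M π →ₗ[ℤ] TMod M π :=
  TensorProduct.map ((DistribMulAction.toAddMonoidHom (EMod π) d).toIntLinearMap)
    ((DistribMulAction.toAddMonoidHom M d).toIntLinearMap)

/-- The subgroup of `𝓔 ⊗ M` generated by the elements `d•t − t`. -/
noncomputable def coinvKerT (π : Γ₁ →* Δ) [DistribMulAction Δ (EMod π)] :
    AddSubgroup (TMod M π) :=
  AddSubgroup.closure {x | ∃ (d : Δ) (t : TMod M π), x = diagT M π d t - t}

/-- The Δ-coinvariants `(𝓔 ⊗ M)_Δ`. -/
abbrev CoinvT (π : Γ₁ →* Δ) [DistribMulAction Δ (EMod π)] : Type :=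
  TMod M π ⧸ coinvKerT M π

/-- 1-cocycles `Z¹(Γ₁, Hom(M,V))`, where `Γ₁` acts on `Hom(M,V)` by
`(γ·f)(m) = f(π(γ)⁻¹·m)`. -/
noncomputable def ZOneM (π : Γ₁ →* Δ) (V : Type) [AddCommGroup V] :
    AddSubgroup (Γ₁ → (M →+ V)) where
  carrier := {Φ | ∀ (g h : Γ₁) (m : M), Φ (g * h) m = Φ g m + Φ h ((π g)⁻¹ • m)}
  zero_mem' := by intro g h m; simp
  add_mem' := by
    intro Φ Ψ hΦ hΨ g h m
    simp only [Pi.add_apply, AddMonoidHom.add_apply, hΦ g h m, hΨ g h m]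
    abel
  neg_mem' := by
    intro Φ hΦ g h m
    simp only [Pi.neg_apply, AddMonoidHom.neg_apply, hΦ g h m]
    abel

/-- The subgroup `I_Δ·M ⊆ M` generated by the elements `c•m − m`. -/
noncomputable def idealSMulM : AddSubgroup M :=
  AddSubgroup.closure {x : M | ∃ (c : Δ) (m : M), x = c • m - m}

/-- First differential `(Γ₁ →₀ M) → M`, `[g]⊗m ↦ π(g)•m − m`, of the complex
computing `H_1(Γ₁, M)` (with `Γ₁` acting on `M` through `π`). -/
noncomputable def dOne (π : Γ₁ →* Δ) : (Γ₁ →₀ M) →+ M :=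
  Finsupp.liftAddHom fun g =>
    DistribMulAction.toAddMonoidHom M (π g) - AddMonoidHom.id M

/-- Second differential `(Γ₁×Γ₁ →₀ M) → (Γ₁ →₀ M)`,
`[g|h]⊗m ↦ [h]⊗m − [gh]⊗m + [g]⊗(π(h)•m)`. -/
noncomputable def dTwo (π : Γ₁ →* Δ) : ((Γ₁ × Γ₁) →₀ M) →+ (Γ₁ →₀ M) :=
  Finsupp.liftAddHom fun p =>
    (Finsupp.singleAddHom p.2 - Finsupp.singleAddHom (p.1 * p.2)
      + (Finsupp.singleAddHom p.1).comp (DistribMulAction.toAddMonoidHom M (π p.2)) :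
        M →+ (Γ₁ →₀ M))

/-- The group homology `H_1(Γ₁, M)` (action of `Γ₁` on `M` through `π`). -/
abbrev HOne (π : Γ₁ →* Δ) : Type :=
  ↥(dOne M π).ker ⧸ ((dTwo M π).range.addSubgroupOf (dOne M π).ker)

end EModule

section St5Aux

set_option linter.unusedSectionVars false

namespace St5

variable {Γ₁ Δ : Type} [Group Γ₁] [Group Δ]

@[simp] lemma augmentation_single (c : Δ) (n : ℤ) :
    augmentation Δ (Finsupp.single c n) = n := by
  simp [augmentation]

@[simp] lemma coe_aidElt (c : Δ) :
    (aidElt c : Δ →₀ ℤ) = Finsupp.single c 1 - Finsupp.single 1 1 := rfl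

@[simp] lemma coe_aidElt2 (a b : Δ) :
    (aidElt2 a b : Δ →₀ ℤ) = Finsupp.single a 1 - Finsupp.single b 1 := rfl

@[simp] lemma aidElt_one : aidElt (1 : Δ) = 0 :=
  Subtype.ext (by simp)

@[simp] lemma aidElt2_self (d : Δ) : aidElt2 d d = 0 :=
  Subtype.ext (by simp)

lemma aidElt_comp (c e : Δ) : aidElt c + aidElt2 (c * e) c = aidElt (c * e) :=
  Subtype.ext (by push_cast [coe_aidElt, coe_aidElt2]; abel)

/-- extensionality for homs out of the augmentation ideal -/
lemma aug_ext {X : Type} [AddCommGroup X] (f₁ f₂ : ↥(augIdeal Δ) →+ X)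
    (h : ∀ c : Δ, f₁ (aidElt c) = f₂ (aidElt c)) : f₁ = f₂ := by
  have hr : ∀ y : Δ →₀ ℤ, y - (augmentation Δ y) • Finsupp.single (1:Δ) (1:ℤ) ∈ augIdeal Δ := by
    intro y
    simp [augIdeal, AddMonoidHom.mem_ker, map_sub, map_zsmul]
  set r : (Δ →₀ ℤ) →+ ↥(augIdeal Δ) :=
    AddMonoidHom.mk' (fun y => ⟨y - (augmentation Δ y) • Finsupp.single 1 1, hr y⟩)
      (by
        intro a b
        apply Subtype.ext
        push_cast
        rw [map_add, add_smul]
        abel) with hrdef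
  have hsingle : ∀ (c : Δ) (n : ℤ), r (Finsupp.single c n) = n • aidElt c := by
    intro c n
    apply Subtype.ext
    push_cast [hrdef, AddMonoidHom.mk'_apply]
    rw [augmentation_single, coe_aidElt, smul_sub, Finsupp.smul_single, Finsupp.smul_single]
    simp [smul_eq_mul]
  have hcomp : f₁.comp r = f₂.comp r := by
    apply Finsupp.addHom_ext
    intro c n
    simp only [AddMonoidHom.comp_apply, hsingle, map_zsmul, h]
  ext y
  have hy : r ↑y = y := by
    apply Subtype.ext
    have : augmentation Δ ↑y = 0 := y.2
    simp [hrdef, this]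
  calc f₁ y = f₁ (r ↑y) := by rw [hy]
    _ = f₂ (r ↑y) := by rw [← AddMonoidHom.comp_apply, hcomp, AddMonoidHom.comp_apply]
    _ = f₂ y := by rw [hy]


variable (π : Γ₁ →* Δ) (M : Type) [AddCommGroup M] [DistribMulAction Δ M]

/-- relation subgroup presenting `(I_{Γ₁} ⊗ M)_{Γ₁}` -/
noncomputable def RQ : AddSubgroup (Γ₁ →₀ M) :=
  AddSubgroup.closure {x | ∃ (g h : Γ₁) (m : M),
    x = Finsupp.single (g * h) m - Finsupp.single g m
        - Finsupp.single h ((π g)⁻¹ • m)}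

abbrev Q : Type := (Γ₁ →₀ M) ⧸ RQ π M

noncomputable def qh (g : Γ₁) : M →+ Q π M :=
  (QuotientAddGroup.mk' (RQ π M)).comp (Finsupp.singleAddHom g)

lemma qh_apply (g : Γ₁) (m : M) :
    qh π M g m = QuotientAddGroup.mk' (RQ π M) (Finsupp.single g m) := rfl

lemma qh_rel (g h : Γ₁) (m : M) :
    qh π M (g * h) m = qh π M g m + qh π M h ((π g)⁻¹ • m) := by
  have hmem : Finsupp.single (g * h) m - Finsupp.single g m
      - Finsupp.single h ((π g)⁻¹ • m) ∈ RQ π M :=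
    AddSubgroup.subset_closure ⟨g, h, m, rfl⟩
  have := (QuotientAddGroup.eq_zero_iff _).mpr hmem
  rw [sub_sub, QuotientAddGroup.mk_sub, sub_eq_zero, QuotientAddGroup.mk_add] at this
  simp only [qh_apply, QuotientAddGroup.mk'_apply]
  exact this

@[simp] lemma qh_one (m : M) : qh π M 1 m = 0 := by
  have := qh_rel π M 1 1 m
  simp only [one_mul, map_one, inv_one, one_smul] at this
  exact left_eq_add.mp this

lemma qh_inv (g : Γ₁) (m : M) : qh π M g⁻¹ m = - qh π M g (π g • m) := by
  have h2 := (qh_rel π M g g⁻¹ (π g • m)).symm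
  simp only [mul_inv_cancel, inv_smul_smul, qh_one] at h2
  rw [add_comm] at h2
  exact eq_neg_of_add_eq_zero_left h2


variable (σ : Δ → Γ₁)

lemma qh_conj (hσ : ∀ c, π (σ c) = c) (d : Δ) (k : ↥π.ker) (m : M) :
    qh π M (σ d * ↑k * (σ d)⁻¹) (d • m) = qh π M ↑k m := by
  have hk : π (↑k : Γ₁) = 1 := k.2
  simp [qh_rel, qh_inv, map_mul, hσ, hk, smul_smul, mul_assoc]

lemma qh_main (hσ : ∀ c, π (σ c) = c) (d c : Δ) (m : M) :
    qh π M (σ d * σ c * (σ (d * c))⁻¹) (d • m)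
      + (qh π M (σ (d * c)) (d • m) - qh π M (σ d) (d • m))
      = qh π M (σ c) m := by
  simp [qh_rel, qh_inv, map_mul, hσ, smul_smul, mul_assoc]
  abel

lemma qh_ker_mul (k k' : ↥π.ker) :
    qh π M (↑(k * k') : Γ₁) = qh π M ↑k + qh π M ↑k' := by
  ext m
  have hk : π (↑k : Γ₁) = 1 := k.2
  have hc : ((↑(k * k') : Γ₁)) = (↑k : Γ₁) * ↑k' := rfl
  rw [hc, qh_rel, hk]
  simp

noncomputable def Af : Abelianization ↥π.ker →* Multiplicative (M →+ Q π M) :=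
  Abelianization.lift
    (MonoidHom.mk' (fun k : ↥π.ker => Multiplicative.ofAdd (qh π M ↑k))
      (fun k k' => by
        show Multiplicative.ofAdd (qh π M ↑(k * k')) = _
        rw [← ofAdd_add, qh_ker_mul]))

noncomputable def Ahom : Additive (Abelianization ↥π.ker) →+ (M →+ Q π M) :=
  AddMonoidHom.mk' (fun g => Multiplicative.toAdd (Af π M (Additive.toMul g)))
    (fun a b => by simp [map_mul])

@[simp] lemma Ahom_of (k : ↥π.ker) :
    Ahom π M (Additive.ofMul (Abelianization.of k)) = qh π M ↑k := by
  simp [Ahom, Af]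

noncomputable def Lhom : (Δ →₀ ℤ) →+ (M →+ Q π M) :=
  Finsupp.liftAddHom fun c => zmultiplesHom _ (qh π M (σ c))

@[simp] lemma Lhom_single (c : Δ) (n : ℤ) :
    Lhom π M σ (Finsupp.single c n) = n • qh π M (σ c) := by
  simp [Lhom]

noncomputable def Bhom : EMod π →+ (M →+ Q π M) :=
  (Ahom π M).coprod ((Lhom π M σ).comp (augIdeal Δ).subtype)

@[simp] lemma Bhom_apply (g : Additive (Abelianization ↥π.ker)) (y : ↥(augIdeal Δ)) :
    Bhom π M σ (g, y) = Ahom π M g + Lhom π M σ ↑y := by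
  simp [Bhom]

noncomputable def alphaBil : EMod π →ₗ[ℤ] M →ₗ[ℤ] Q π M where
  toFun e := (Bhom π M σ e).toIntLinearMap
  map_add' a b := by ext m; simp
  map_smul' n a := by ext m; simp

noncomputable def alphaL : TMod M π →ₗ[ℤ] Q π M := TensorProduct.lift (alphaBil π M σ)

@[simp] lemma alphaL_tmul (e : EMod π) (m : M) :
    alphaL π M σ (e ⊗ₜ[ℤ] m) = Bhom π M σ e m := rfl


lemma of_surj {G : Type} [Group G] :
    Function.Surjective (Abelianization.of : G → Abelianization G) := fun y =>
  (QuotientGroup.mk_surjective y).imp fun _ h => h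

lemma kappaE_one (hσ : ∀ c, π (σ c) = c) (hσ1 : σ 1 = 1) (d : Δ) :
    kappaE π σ hσ d 1 = 1 := by
  have h1 : σ d * σ 1 * (σ (d * 1))⁻¹ = 1 := by
    rw [hσ1, mul_one, mul_one, mul_inv_cancel]
  unfold kappaE
  rw [show (⟨σ d * σ 1 * (σ (d * 1))⁻¹, by
      have : π (σ d * σ 1 * (σ (d * 1))⁻¹) = 1 := by
        rw [map_mul, map_mul, map_inv, hσ, hσ, hσ, mul_inv_cancel]
      simpa [MonoidHom.mem_ker] using this⟩ : ↥π.ker) = 1 from Subtype.ext h1, map_one]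

lemma Ahom_kappaE (hσ : ∀ c, π (σ c) = c) (d c : Δ) :
    Ahom π M (Additive.ofMul (kappaE π σ hσ d c))
      = qh π M (σ d * σ c * (σ (d * c))⁻¹) :=
  Ahom_of π M _

lemma conjAb_of (d : Δ) (k : ↥π.ker) :
    conjAb π σ d (Abelianization.of k)
      = Abelianization.of (MulAut.conjNormal (σ d) k) :=
  Abelianization.map_of _ _

variable [DistribMulAction Δ (EMod π)]

lemma alpha_diag (hσ : ∀ c, π (σ c) = c) (hσ1 : σ 1 = 1)
    (hE : EActionFormula π σ hσ) (d : Δ) (t : TMod M π) :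
    alphaL π M σ (diagT M π d t) = alphaL π M σ t := by
  induction t using TensorProduct.induction_on with
  | zero => simp
  | add x y hx hy => rw [map_add, map_add, map_add, hx, hy]
  | tmul e m =>
    have hdiag : diagT M π d (e ⊗ₜ[ℤ] m) = (d • e) ⊗ₜ[ℤ] (d • m) := rfl
    rw [hdiag]
    obtain ⟨g, y⟩ := e
    have hsplit : ((g, y) : EMod π) = (g, 0) + (0, y) := by
      rw [Prod.mk_add_mk, add_zero, zero_add]
    rw [hsplit, smul_add, TensorProduct.add_tmul, TensorProduct.add_tmul, map_add, map_add]
    have case1 : alphaL π M σ ((d • ((g, 0) : EMod π)) ⊗ₜ[ℤ] (d • m))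
        = alphaL π M σ (((g, 0) : EMod π) ⊗ₜ[ℤ] m) := by
      obtain ⟨k, hk⟩ := of_surj (Additive.toMul g)
      have hg : ((g, (0 : ↥(augIdeal Δ))) : EMod π)
          = (Additive.ofMul (Abelianization.of k), aidElt 1) := by
        rw [aidElt_one, hk]
        rfl
      rw [hg, hE d (Abelianization.of k) 1, kappaE_one π σ hσ hσ1, mul_one,
        conjAb_of, mul_one, aidElt2_self]
      rw [alphaL_tmul, alphaL_tmul, Bhom_apply, Bhom_apply, Ahom_of, Ahom_of]
      simp only [aidElt_one, ZeroMemClass.coe_zero, map_zero, AddMonoidHom.add_apply,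
        AddMonoidHom.zero_apply, add_zero]
      rw [show ((MulAut.conjNormal (σ d) k : ↥π.ker) : Γ₁) = σ d * ↑k * (σ d)⁻¹ from rfl]
      exact qh_conj π M σ hσ d k m
    have case2 : alphaL π M σ ((d • ((0, y) : EMod π)) ⊗ₜ[ℤ] (d • m))
        = alphaL π M σ (((0, y) : EMod π) ⊗ₜ[ℤ] m) := by
      have hpair : ∀ a b : ↥(augIdeal Δ),
          (((0 : Additive (Abelianization ↥π.ker)), a + b) : EMod π)
            = ((0, a) : EMod π) + ((0, b) : EMod π) := by
        intro a b; rw [Prod.mk_add_mk, add_zero]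
      let f₁ : ↥(augIdeal Δ) →+ Q π M :=
        AddMonoidHom.mk' (fun yc => alphaL π M σ ((d • ((0, yc) : EMod π)) ⊗ₜ[ℤ] (d • m)))
          (by intro a b
              show alphaL π M σ ((d • ((0, a + b) : EMod π)) ⊗ₜ[ℤ] (d • m)) = _
              rw [hpair, smul_add, TensorProduct.add_tmul, map_add])
      let f₂ : ↥(augIdeal Δ) →+ Q π M :=
        AddMonoidHom.mk' (fun yc => alphaL π M σ (((0, yc) : EMod π) ⊗ₜ[ℤ] m))
          (by intro a b
              show alphaL π M σ (((0, a + b) : EMod π) ⊗ₜ[ℤ] m) = _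
              rw [hpair, TensorProduct.add_tmul, map_add])
      have hff : f₁ = f₂ := by
        apply aug_ext
        intro c
        show alphaL π M σ ((d • ((0, aidElt c) : EMod π)) ⊗ₜ[ℤ] (d • m))
          = alphaL π M σ (((0, aidElt c) : EMod π) ⊗ₜ[ℤ] m)
        have h0 : ((0 : Additive (Abelianization ↥π.ker)), aidElt c)
            = (Additive.ofMul (1 : Abelianization ↥π.ker), aidElt c) := rfl
        rw [h0, hE d 1 c, map_one, one_mul]
        rw [alphaL_tmul, alphaL_tmul, Bhom_apply, Bhom_apply, Ahom_kappaE]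
        simp only [AddMonoidHom.add_apply, coe_aidElt, coe_aidElt2, map_sub,
          Lhom_single, one_smul, AddMonoidHom.sub_apply, hσ1, qh_one]
        simp only [one_smul, one_zsmul, ofMul_one, map_zero, AddMonoidHom.zero_apply, zero_add,
          qh_one, sub_zero]
        simp only [AddMonoidHom.zsmul_apply, one_zsmul, qh_one, sub_zero]
        exact qh_main π M σ hσ d c m
      exact DFunLike.congr_fun hff y
    rw [case1, case2]


noncomputable def alphaBar (hσ : ∀ c, π (σ c) = c) (hσ1 : σ 1 = 1)
    (hE : EActionFormula π σ hσ) : CoinvT M π →+ Q π M :=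
  QuotientAddGroup.lift (coinvKerT M π) (alphaL π M σ).toAddMonoidHom
    (by
      intro x hx
      rw [AddMonoidHom.mem_ker]
      refine AddSubgroup.closure_induction (fun x hx => ?_) ?_
        (fun a b _ _ ha hb => ?_) (fun a _ ha => ?_) hx
      · obtain ⟨d, t, rfl⟩ := hx
        show alphaL π M σ _ = 0
        rw [map_sub, alpha_diag π M σ hσ hσ1 hE, sub_self]
      · exact map_zero _
      · show alphaL π M σ _ = 0
        rw [map_add]
        show alphaL π M σ _ + alphaL π M σ _ = 0
        rw [show (alphaL π M σ) a = 0 from ha, show (alphaL π M σ) b = 0 from hb, add_zero]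
      · show alphaL π M σ _ = 0
        rw [map_neg]
        show -(alphaL π M σ _) = 0
        rw [show (alphaL π M σ) a = 0 from ha, neg_zero])

noncomputable def mkC : TMod M π →+ CoinvT M π := QuotientAddGroup.mk' (coinvKerT M π)

lemma alphaBar_mk (hσ : ∀ c, π (σ c) = c) (hσ1 : σ 1 = 1)
    (hE : EActionFormula π σ hσ) (t : TMod M π) :
    alphaBar π M σ hσ hσ1 hE (mkC π M t) = alphaL π M σ t := rfl

lemma mkC_diag (d : Δ) (t : TMod M π) :
    mkC π M (diagT M π d t) = mkC π M t := by
  have hmem : diagT M π d t - t ∈ coinvKerT M π :=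
    AddSubgroup.subset_closure ⟨d, t, rfl⟩
  have h2 := (QuotientAddGroup.eq_zero_iff _).mpr hmem
  rw [QuotientAddGroup.mk_sub, sub_eq_zero] at h2
  exact h2

noncomputable def kE (hσ : ∀ c, π (σ c) = c) (g : Γ₁) : ↥π.ker :=
  ⟨g * (σ (π g))⁻¹, by rw [MonoidHom.mem_ker, map_mul, map_inv, hσ, mul_inv_cancel]⟩

@[simp] lemma kE_coe (hσ : ∀ c, π (σ c) = c) (g : Γ₁) :
    (kE π σ hσ g : Γ₁) = g * (σ (π g))⁻¹ := rfl

noncomputable def kKap (hσ : ∀ c, π (σ c) = c) (a b : Δ) : ↥π.ker :=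
  ⟨σ a * σ b * (σ (a * b))⁻¹, by
    rw [MonoidHom.mem_ker, map_mul, map_mul, map_inv, hσ, hσ, hσ, mul_inv_cancel]⟩

@[simp] lemma kKap_coe (hσ : ∀ c, π (σ c) = c) (a b : Δ) :
    (kKap π σ hσ a b : Γ₁) = σ a * σ b * (σ (a * b))⁻¹ := rfl

lemma kappaE_eq (hσ : ∀ c, π (σ c) = c) (a b : Δ) :
    kappaE π σ hσ a b = Abelianization.of (kKap π σ hσ a b) := by
  unfold kappaE kKap
  rfl

lemma of_eq {x y : ↥π.ker} (h : (x : Γ₁) = y) :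
    Abelianization.of x = Abelianization.of y := by rw [Subtype.ext h]

noncomputable def Eg (hσ : ∀ c, π (σ c) = c) (g : Γ₁) : EMod π :=
  (Additive.ofMul (Abelianization.of (kE π σ hσ g)), aidElt (π g))

noncomputable def betaF (hσ : ∀ c, π (σ c) = c) : (Γ₁ →₀ M) →+ CoinvT M π :=
  Finsupp.liftAddHom fun g =>
    AddMonoidHom.mk' (fun m => mkC π M ((Eg π σ hσ g) ⊗ₜ[ℤ] m))
      (by intro a b
          show mkC π M (Eg π σ hσ g ⊗ₜ[ℤ] (a + b)) = _
          rw [TensorProduct.tmul_add, map_add])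

lemma betaF_single (hσ : ∀ c, π (σ c) = c) (g : Γ₁) (m : M) :
    betaF π M σ hσ (Finsupp.single g m) = mkC π M ((Eg π σ hσ g) ⊗ₜ[ℤ] m) := by
  simp [betaF]

variable (hσ : ∀ c, π (σ c) = c)

lemma Eg_rel (hE : EActionFormula π σ hσ) (g h : Γ₁) (m : M) :
    mkC π M (Eg π σ hσ (g * h) ⊗ₜ[ℤ] m)
      = mkC π M (Eg π σ hσ g ⊗ₜ[ℤ] m)
        + mkC π M (Eg π σ hσ h ⊗ₜ[ℤ] ((π g)⁻¹ • m)) := by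
  have key : mkC π M (Eg π σ hσ h ⊗ₜ[ℤ] ((π g)⁻¹ • m))
      = mkC π M ((π g • Eg π σ hσ h) ⊗ₜ[ℤ] m) := by
    have h2 := mkC_diag π M (π g) (Eg π σ hσ h ⊗ₜ[ℤ] ((π g)⁻¹ • m))
    rw [show diagT M π (π g) (Eg π σ hσ h ⊗ₜ[ℤ] ((π g)⁻¹ • m))
        = (π g • Eg π σ hσ h) ⊗ₜ[ℤ] (π g • (π g)⁻¹ • m) from rfl, smul_inv_smul] at h2
    exact h2.symm
  rw [key, ← map_add, ← TensorProduct.add_tmul]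
  have hact : (π g) • Eg π σ hσ h
      = (Additive.ofMul (conjAb π σ (π g) (Abelianization.of (kE π σ hσ h))
          * kappaE π σ hσ (π g) (π h)), aidElt2 (π g * π h) (π g)) :=
    hE (π g) (Abelianization.of (kE π σ hσ h)) (π h)
  rw [hact]
  have hEsum : Eg π σ hσ (g * h)
      = Eg π σ hσ g + (Additive.ofMul (conjAb π σ (π g) (Abelianization.of (kE π σ hσ h))
          * kappaE π σ hσ (π g) (π h)), aidElt2 (π g * π h) (π g)) := by
    refine Prod.ext_iff.mpr ⟨?_, ?_⟩
    · show Additive.ofMul (Abelianization.of (kE π σ hσ (g * h)))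
        = Additive.ofMul (Abelianization.of (kE π σ hσ g))
          + Additive.ofMul (conjAb π σ (π g) (Abelianization.of (kE π σ hσ h))
              * kappaE π σ hσ (π g) (π h))
      rw [conjAb_of, kappaE_eq, ← ofMul_mul, ← map_mul, ← map_mul]
      refine congrArg _ (of_eq π ?_)
      push_cast [kE_coe, kKap_coe, MulAut.conjNormal_apply]
      rw [map_mul π]
      group
    · show aidElt (π (g * h)) = aidElt (π g) + aidElt2 (π g * π h) (π g)
      rw [map_mul, ← aidElt_comp]
  rw [hEsum]


lemma betaF_rq (hE : EActionFormula π σ hσ) :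
    ∀ x ∈ RQ π M, betaF π M σ hσ x = 0 := by
  intro x hx
  refine AddSubgroup.closure_induction (fun x hx => ?_) ?_
    (fun a b _ _ ha hb => ?_) (fun a _ ha => ?_) hx
  · obtain ⟨g, h, m, rfl⟩ := hx
    rw [map_sub, map_sub, betaF_single, betaF_single, betaF_single,
      Eg_rel π M σ hσ hE]
    abel
  · exact map_zero _
  · rw [map_add, ha, hb, add_zero]
  · rw [map_neg, ha, neg_zero]

noncomputable def betaBar (hE : EActionFormula π σ hσ) : Q π M →+ CoinvT M π :=
  QuotientAddGroup.lift (RQ π M) (betaF π M σ hσ)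
    (fun x hx => AddMonoidHom.mem_ker.mpr (betaF_rq π M σ hσ hE x hx))

lemma betaBar_qh (hE : EActionFormula π σ hσ) (g : Γ₁) (m : M) :
    betaBar π M σ hσ hE (qh π M g m) = mkC π M ((Eg π σ hσ g) ⊗ₜ[ℤ] m) := by
  rw [qh_apply]
  show betaF π M σ hσ (Finsupp.single g m) = _
  rw [betaF_single]

lemma ab_id (hσ1 : σ 1 = 1) (hE : EActionFormula π σ hσ) (x : Q π M) :
    alphaBar π M σ hσ hσ1 hE (betaBar π M σ hσ hE x) = x := by
  obtain ⟨y, rfl⟩ := QuotientAddGroup.mk'_surjective (RQ π M) x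
  have hcomp : ((alphaBar π M σ hσ hσ1 hE).comp (betaBar π M σ hσ hE)).comp
      (QuotientAddGroup.mk' (RQ π M)) = QuotientAddGroup.mk' (RQ π M) := by
    apply Finsupp.addHom_ext
    intro g m
    show alphaBar π M σ hσ hσ1 hE (betaBar π M σ hσ hE
      (QuotientAddGroup.mk' (RQ π M) (Finsupp.single g m)))
      = QuotientAddGroup.mk' (RQ π M) (Finsupp.single g m)
    rw [← qh_apply, betaBar_qh π M σ hσ hE, alphaBar_mk, alphaL_tmul]
    rw [show Eg π σ hσ g
        = (Additive.ofMul (Abelianization.of (kE π σ hσ g)), aidElt (π g)) from rfl,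
      Bhom_apply, Ahom_of]
    simp only [coe_aidElt, map_sub, Lhom_single, one_zsmul, AddMonoidHom.add_apply,
      AddMonoidHom.sub_apply, hσ1, qh_one, sub_zero, kE_coe]
    simp only [AddMonoidHom.zsmul_apply, one_zsmul, qh_one, sub_zero]
    have hrel := qh_rel π M (g * (σ (π g))⁻¹) (σ (π g)) m
    rw [inv_mul_cancel_right] at hrel
    have hπ1 : (π (g * (σ (π g))⁻¹))⁻¹ = 1 := by
      rw [map_mul, map_inv, hσ, mul_inv_cancel, inv_one]
    rw [hπ1, one_smul] at hrel
    rw [← hrel, qh_apply]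
  exact DFunLike.congr_fun hcomp y


lemma Eg_sigma (hσ1 : σ 1 = 1) (c : Δ) :
    Eg π σ hσ (σ c) = ((0 : Additive (Abelianization ↥π.ker)), aidElt c) := by
  refine Prod.ext_iff.mpr ⟨?_, ?_⟩
  · show Additive.ofMul (Abelianization.of (kE π σ hσ (σ c)))
      = Additive.ofMul (1 : Abelianization ↥π.ker)
    refine congrArg _ ?_
    rw [show (1 : Abelianization ↥π.ker) = Abelianization.of 1 from (map_one _).symm]
    refine of_eq π ?_
    rw [kE_coe, hσ, mul_inv_cancel, OneMemClass.coe_one]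
  · show aidElt (π (σ c)) = aidElt c
    rw [hσ]

lemma Eg_one (hσ1 : σ 1 = 1) : Eg π σ hσ (1 : Γ₁) = 0 := by
  refine Prod.ext_iff.mpr ⟨?_, ?_⟩
  · show Additive.ofMul (Abelianization.of (kE π σ hσ 1))
      = Additive.ofMul (1 : Abelianization ↥π.ker)
    refine congrArg _ ?_
    rw [show (1 : Abelianization ↥π.ker) = Abelianization.of 1 from (map_one _).symm]
    refine of_eq π ?_
    rw [kE_coe, map_one, hσ1, OneMemClass.coe_one, one_mul, inv_one]
  · show aidElt (π 1) = 0
    rw [map_one, aidElt_one]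

lemma Eg_ker (hσ1 : σ 1 = 1) (k : ↥π.ker) :
    Eg π σ hσ (↑k : Γ₁) = (Additive.ofMul (Abelianization.of k), 0) := by
  have hker : π (↑k : Γ₁) = 1 := k.2
  refine Prod.ext_iff.mpr ⟨?_, ?_⟩
  · show Additive.ofMul (Abelianization.of (kE π σ hσ ↑k))
      = Additive.ofMul (Abelianization.of k)
    refine congrArg _ (of_eq π ?_)
    rw [kE_coe, hker, hσ1, inv_one, mul_one]
  · show aidElt (π ↑k) = 0
    rw [hker, aidElt_one]

lemma betaBar_surj (hσ1 : σ 1 = 1) (hE : EActionFormula π σ hσ) :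
    Function.Surjective (betaBar π M σ hσ hE) := by
  have hmem : ∀ t : TMod M π, mkC π M t ∈ (betaBar π M σ hσ hE).range := by
    intro t
    induction t using TensorProduct.induction_on with
    | zero => rw [map_zero]; exact zero_mem _
    | add a b ha hb => rw [map_add]; exact add_mem ha hb
    | tmul e m =>
      obtain ⟨g, y⟩ := e
      have hsplit : ((g, y) : EMod π) = (g, 0) + (0, y) := by
        rw [Prod.mk_add_mk, add_zero, zero_add]
      rw [hsplit, TensorProduct.add_tmul, map_add]
      refine add_mem ?_ ?_
      · obtain ⟨k, hk⟩ := of_surj (Additive.toMul g)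
        refine ⟨qh π M (↑k) m, ?_⟩
        rw [betaBar_qh π M σ hσ hE, Eg_ker π σ hσ hσ1, hk]
        rfl
      · let f₁ : ↥(augIdeal Δ) →+ CoinvT M π :=
          AddMonoidHom.mk' (fun yc => mkC π M (((0, yc) : EMod π) ⊗ₜ[ℤ] m))
            (by intro a b
                show mkC π M (((0, a + b) : EMod π) ⊗ₜ[ℤ] m) = _
                rw [show (((0, a + b)) : EMod π) = ((0, a) : EMod π) + ((0, b) : EMod π) by
                    rw [Prod.mk_add_mk, add_zero],
                  TensorProduct.add_tmul, map_add])
        let G0 : (Δ →₀ ℤ) →+ Q π M :=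
          Finsupp.liftAddHom fun c => zmultiplesHom _ (qh π M (σ c) m)
        have hff : f₁ = (betaBar π M σ hσ hE).comp (G0.comp (augIdeal Δ).subtype) := by
          apply aug_ext
          intro c
          show mkC π M (((0, aidElt c) : EMod π) ⊗ₜ[ℤ] m)
            = betaBar π M σ hσ hE (G0 ((aidElt c : ↥(augIdeal Δ)) : Δ →₀ ℤ))
          rw [coe_aidElt, map_sub]
          rw [show G0 (Finsupp.single c 1) = qh π M (σ c) m by simp [G0],
            show G0 (Finsupp.single 1 1) = qh π M (σ 1) m by simp [G0]]
          rw [map_sub, betaBar_qh π M σ hσ hE, betaBar_qh π M σ hσ hE,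
            Eg_sigma π σ hσ hσ1, hσ1, Eg_one π σ hσ hσ1,
            TensorProduct.zero_tmul, map_zero, sub_zero]
        have := DFunLike.congr_fun hff y
        exact ⟨_, this.symm⟩
  intro z
  obtain ⟨t, rfl⟩ := QuotientAddGroup.mk'_surjective (coinvKerT M π) z
  exact hmem t

lemma ba_id (hσ1 : σ 1 = 1) (hE : EActionFormula π σ hσ) (x : CoinvT M π) :
    betaBar π M σ hσ hE (alphaBar π M σ hσ hσ1 hE x) = x := by
  obtain ⟨q, rfl⟩ := betaBar_surj π M σ hσ hσ1 hE x
  rw [ab_id π M σ hσ hσ1 hE]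


variable {V : Type} [AddCommGroup V]

lemma mem_ZOneM_iff {Φ : Γ₁ → (M →+ V)} :
    Φ ∈ ZOneM M π V ↔ ∀ (g h : Γ₁) (m : M),
      Φ (g * h) m = Φ g m + Φ h ((π g)⁻¹ • m) := Iff.rfl

noncomputable def thetaFun (hσ1 : σ 1 = 1) (hE : EActionFormula π σ hσ)
    (ψ : CoinvT M π →+ V) : ↥(ZOneM M π V) :=
  ⟨fun g => (ψ.comp (betaBar π M σ hσ hE)).comp (qh π M g), by
    rw [mem_ZOneM_iff]
    intro g h m
    show ψ (betaBar π M σ hσ hE (qh π M (g * h) m))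
      = ψ (betaBar π M σ hσ hE (qh π M g m))
        + ψ (betaBar π M σ hσ hE (qh π M h ((π g)⁻¹ • m)))
    rw [qh_rel, map_add, map_add]⟩

noncomputable def descendZ (Φ : ↥(ZOneM M π V)) : Q π M →+ V :=
  QuotientAddGroup.lift (RQ π M)
    (Finsupp.liftAddHom fun g => (Φ : Γ₁ → (M →+ V)) g)
    (by
      intro x hx
      rw [AddMonoidHom.mem_ker]
      refine AddSubgroup.closure_induction (fun x hx => ?_) ?_
        (fun a b _ _ ha hb => ?_) (fun a _ ha => ?_) hx
      · obtain ⟨g, h, m, rfl⟩ := hx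
        rw [map_sub, map_sub]
        simp only [Finsupp.liftAddHom_apply_single]
        have hΦ := (mem_ZOneM_iff π M).mp Φ.2 g h m
        rw [hΦ]
        abel
      · exact map_zero _
      · rw [map_add, ha, hb, add_zero]
      · rw [map_neg, ha, neg_zero])

lemma descendZ_qh (Φ : ↥(ZOneM M π V)) (g : Γ₁) (m : M) :
    descendZ π M Φ (qh π M g m) = (Φ : Γ₁ → (M →+ V)) g m := by
  rw [qh_apply]
  show (Finsupp.liftAddHom fun g => (Φ : Γ₁ → (M →+ V)) g) (Finsupp.single g m) = _
  simp

noncomputable def thetaInv (hσ1 : σ 1 = 1) (hE : EActionFormula π σ hσ)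
    (Φ : ↥(ZOneM M π V)) : CoinvT M π →+ V :=
  (descendZ π M Φ).comp (alphaBar π M σ hσ hσ1 hE)

noncomputable def Theta (hσ1 : σ 1 = 1) (hE : EActionFormula π σ hσ)
    (V : Type) [AddCommGroup V] :
    (CoinvT M π →+ V) ≃+ ↥(ZOneM M π V) where
  toFun := thetaFun π M σ hσ hσ1 hE
  invFun := thetaInv π M σ hσ hσ1 hE
  left_inv ψ := by
    have hcomp : descendZ π M (thetaFun π M σ hσ hσ1 hE ψ)
        = ψ.comp (betaBar π M σ hσ hE) := by
      apply QuotientAddGroup.addMonoidHom_ext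
      apply Finsupp.addHom_ext
      intro g m
      show descendZ π M (thetaFun π M σ hσ hσ1 hE ψ)
          (QuotientAddGroup.mk' (RQ π M) (Finsupp.single g m))
        = ψ (betaBar π M σ hσ hE (QuotientAddGroup.mk' (RQ π M) (Finsupp.single g m)))
      rw [← qh_apply, descendZ_qh]
      rfl
    show (descendZ π M (thetaFun π M σ hσ hσ1 hE ψ)).comp
        (alphaBar π M σ hσ hσ1 hE) = ψ
    rw [hcomp]
    ext x
    show ψ (betaBar π M σ hσ hE (alphaBar π M σ hσ hσ1 hE x)) = ψ x
    rw [ba_id π M σ hσ hσ1 hE]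
  right_inv Φ := by
    apply Subtype.ext
    funext g
    ext m
    show descendZ π M Φ (alphaBar π M σ hσ hσ1 hE
      (betaBar π M σ hσ hE (qh π M g m))) = (Φ : Γ₁ → (M →+ V)) g m
    rw [ab_id π M σ hσ hσ1 hE, descendZ_qh]
  map_add' ψ₁ ψ₂ := by
    apply Subtype.ext
    funext g
    ext m
    show (ψ₁ + ψ₂) (betaBar π M σ hσ hE (qh π M g m)) = _
    rfl

end St5

end St5Aux


section Statement5

variable {Γ₁ Δ : Type} [Group Γ₁] [Group Δ]

theorem statement5
    (π : Γ₁ →* Δ) (hπ : Function.Surjective π)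
    (σ : Δ → Γ₁) (hσ : ∀ c, π (σ c) = c) (hσ1 : σ 1 = 1)
    [Fintype Δ]
    [DistribMulAction Δ (EMod π)] (hE : EActionFormula π σ hσ)
    (M : Type) [AddCommGroup M] [DistribMulAction Δ M] :
    ∃ Θ : ∀ (V : Type) [AddCommGroup V],
        (CoinvT M π →+ V) ≃+ ↥(ZOneM M π V),
      -- functoriality in V: for f : V →+ W, Θ(f ∘ ψ) = (postcompose f)(Θ ψ)
      ∀ (V W : Type) [AddCommGroup V] [AddCommGroup W] (f : V →+ W)
          (ψ : CoinvT M π →+ V) (g : Γ₁) (m : M),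
        ((Θ W (f.comp ψ) : Γ₁ → (M →+ W)) g) m =
          f (((Θ V ψ : Γ₁ → (M →+ V)) g) m) := by
  refine ⟨fun V _ => St5.Theta π M σ hσ hσ1 hE V, ?_⟩
  intro V W _ _ f ψ g m
  rfl

end Statement5
end

section
/- With Γ₁, Γ₂, Δ, M, 𝓔 as above, the isomorphism Θ_V : Hom((𝓔 ⊗ M)_Δ, V) → Z¹(Γ₁, Hom(M, V)), functorial in the abelian group V, can be chosen so that for every V and every homomorphism α : M → V, the element (α|_{I_ΔM}) ∘ q of Hom((𝓔 ⊗ M)_Δ, V) is sent by Θ_V to the coboundary γ ↦ γ·α − α in B¹(Γ₁, Hom(M, V)). -/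
/-!
STATEMENT 6.  The functorial isomorphism Θ_V : Hom((𝓔⊗M)_Δ, V) ≅ Z¹(Γ₁, Hom(M,V))
can be chosen so that for every V and α : M → V, the element (α|_{I_ΔM}) ∘ q
is sent to the coboundary γ ↦ γ·α − α.  Here q : (𝓔⊗M)_Δ → I_ΔM ⊆ M is the
map induced by (g, c−1) ⊗ m ↦ c⁻¹·m − m.
-/

open scoped TensorProduct

section St6Aux

variable {Γ₁ Δ : Type} [Group Γ₁] [Group Δ]

/-- `aidElt 1 = 0`. -/
lemma aidElt_one : (aidElt 1 : ↥(augIdeal Δ)) = 0 := by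
  apply Subtype.ext; simp [aidElt]

/-- The element `γ·σ(πγ)⁻¹` of `ker π`. -/
noncomputable def kerElt (π : Γ₁ →* Δ) (σ : Δ → Γ₁) (hσ : ∀ c, π (σ c) = c)
    (γ : Γ₁) : ↥π.ker :=
  ⟨γ * (σ (π γ))⁻¹, by simp [MonoidHom.mem_ker, map_mul, hσ]⟩

/-- The crossed-homomorphism `γ ↦ γ − 1` with values in `𝓔`. -/
noncomputable def eElt (π : Γ₁ →* Δ) (σ : Δ → Γ₁) (hσ : ∀ c, π (σ c) = c)
    (γ : Γ₁) : EMod π :=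
  (Additive.ofMul (Abelianization.of (kerElt π σ hσ γ)), aidElt (π γ))

lemma eElt_mul (π : Γ₁ →* Δ) (σ : Δ → Γ₁) (hσ : ∀ c, π (σ c) = c)
    [DistribMulAction Δ (EMod π)] (hE : EActionFormula π σ hσ)
    (γ δ : Γ₁) :
    eElt π σ hσ (γ * δ) = eElt π σ hσ γ + (π γ) • eElt π σ hσ δ := by
  rw [eElt, eElt, eElt, hE (π γ) (Abelianization.of (kerElt π σ hσ δ)) (π δ)]
  apply Prod.ext
  · show Additive.ofMul _ = Additive.ofMul _ + Additive.ofMul _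
    rw [← ofMul_mul]
    congr 1
    rw [conjAb, Abelianization.map_of, kappaE, ← map_mul, ← map_mul]
    congr 1
    apply Subtype.ext
    show (γ * δ) * (σ (π (γ * δ)))⁻¹ = _
    push_cast [MulAut.conjNormal_apply]
    show γ * δ * (σ (π (γ * δ)))⁻¹ =
      γ * (σ (π γ))⁻¹ * (σ (π γ) * (δ * (σ (π δ))⁻¹) * (σ (π γ))⁻¹ *
        (σ (π γ) * σ (π δ) * (σ (π γ * π δ))⁻¹))
    rw [map_mul]
    group
  · show aidElt (π (γ * δ)) = aidElt (π γ) + aidElt2 (π γ * π δ) (π γ)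
    apply Subtype.ext
    show (Finsupp.single (π (γ*δ)) 1 - Finsupp.single 1 1 : Δ →₀ ℤ) = _
    rw [map_mul]
    show _ = (Finsupp.single (π γ) 1 - Finsupp.single 1 1)
      + (Finsupp.single (π γ * π δ) 1 - Finsupp.single (π γ) 1)
    abel

end St6Aux

section St6Aux2

variable {Γ₁ Δ : Type} [Group Γ₁] [Group Δ]

/-- Generators of `𝓔`. -/
def eGens (π : Γ₁ →* Δ) : Set (EMod π) :=
  {p | ∃ (k : ↥π.ker) (c : Δ), p = (Additive.ofMul (Abelianization.of k), aidElt c)}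

lemma augIdeal_mem_closure (s : ↥(augIdeal Δ)) :
    s ∈ AddSubgroup.closure (Set.range (aidElt (Δ := Δ))) := by
  have hsum : ∑ c ∈ s.1.support, s.1 c = 0 := by
    have := s.2
    simp only [augIdeal, AddMonoidHom.mem_ker, augmentation] at this
    rw [Finsupp.liftAddHom_apply] at this
    simpa [Finsupp.sum] using this
  have key : s = ∑ c ∈ s.1.support, s.1 c • aidElt c := by
    apply Subtype.ext
    have : ((∑ c ∈ s.1.support, s.1 c • aidElt c : ↥(augIdeal Δ)) : Δ →₀ ℤ)
        = ∑ c ∈ s.1.support, s.1 c • (Finsupp.single c 1 - Finsupp.single 1 1) := by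
      push_cast
      rfl
    rw [this]
    have : ∑ c ∈ s.1.support, s.1 c • (Finsupp.single c 1 - Finsupp.single 1 1 : Δ →₀ ℤ)
        = (∑ c ∈ s.1.support, Finsupp.single c (s.1 c))
          - (∑ c ∈ s.1.support, s.1 c) • Finsupp.single 1 1 := by
      rw [Finset.sum_smul, ← Finset.sum_sub_distrib]
      congr 1
      ext c
      rw [smul_sub]
      congr 1
      simp [Finsupp.smul_single]
    rw [this, hsum, zero_smul, sub_zero]
    exact (Finsupp.sum_single s.1).symm
  rw [key]
  exact sum_mem (fun c _ => AddSubgroup.zsmul_mem _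
    (AddSubgroup.subset_closure (Set.mem_range_self c)) _)

lemma eGens_closure (π : Γ₁ →* Δ) : AddSubgroup.closure (eGens π) = ⊤ := by
  rw [eq_top_iff]
  rintro ⟨a, s⟩ -
  obtain ⟨k, rfl⟩ : ∃ k, Additive.ofMul (Abelianization.of k) = a := by
    obtain ⟨k, hk⟩ := QuotientGroup.mk_surjective (Additive.toMul a)
    exact ⟨k, congrArg Additive.ofMul hk⟩
  have h1 : ((Additive.ofMul (Abelianization.of k), 0) : EMod π)
      ∈ AddSubgroup.closure (eGens π) := by
    have : ((Additive.ofMul (Abelianization.of k), 0) : EMod π)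
        = (Additive.ofMul (Abelianization.of k), aidElt 1) := by rw [aidElt_one]
    rw [this]
    exact AddSubgroup.subset_closure ⟨k, 1, rfl⟩
  have h2 : ((0, s) : EMod π) ∈ AddSubgroup.closure (eGens π) := by
    have hs := augIdeal_mem_closure s
    have hmap : ∀ x ∈ AddSubgroup.closure (Set.range (aidElt (Δ := Δ))),
        ((0, x) : EMod π) ∈ AddSubgroup.closure (eGens π) := by
      intro x hx
      induction hx using AddSubgroup.closure_induction with
      | mem y hy =>
        obtain ⟨c, rfl⟩ := hy
        have : ((0, aidElt c) : EMod π)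
            = (Additive.ofMul (Abelianization.of 1), aidElt c) := by
          simp
        rw [this]
        exact AddSubgroup.subset_closure ⟨1, c, rfl⟩
      | zero => exact AddSubgroup.zero_mem _
      | add y z _ _ hy hz => simpa using AddSubgroup.add_mem _ hy hz
      | neg y _ hy => simpa using AddSubgroup.neg_mem _ hy
    exact hmap s hs
  have : ((Additive.ofMul (Abelianization.of k), s) : EMod π)
      = (Additive.ofMul (Abelianization.of k), 0) + (0, s) := by simp
  rw [this]
  exact AddSubgroup.add_mem _ h1 h2

end St6Aux2

section St6Aux3

variable {Γ₁ Δ : Type} [Group Γ₁] [Group Δ]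
variable (π : Γ₁ →* Δ) (σ : Δ → Γ₁) (hσ : ∀ c, π (σ c) = c)
variable [DistribMulAction Δ (EMod π)]
variable (M : Type) [AddCommGroup M] [DistribMulAction Δ M]

/-- In the coinvariants, `(d•x) ⊗ (d•m) = x ⊗ m`. -/
lemma mk_smul_tmul (d : Δ) (x : EMod π) (m : M) :
    (QuotientAddGroup.mk ((d • x) ⊗ₜ[ℤ] (d • m)) : CoinvT M π) =
      QuotientAddGroup.mk (x ⊗ₜ[ℤ] m) := by
  rw [QuotientAddGroup.eq]
  have : -((d • x) ⊗ₜ[ℤ] (d • m)) + x ⊗ₜ[ℤ] m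
      = -(diagT M π d (x ⊗ₜ[ℤ] m) - x ⊗ₜ[ℤ] m) := by
    rw [diagT]
    erw [TensorProduct.map_tmul]
    show _ = -((d • x) ⊗ₜ[ℤ] (d • m) - x ⊗ₜ[ℤ] m)
    abel
  rw [this]
  exact AddSubgroup.neg_mem _ (AddSubgroup.subset_closure ⟨d, x ⊗ₜ[ℤ] m, rfl⟩)

lemma mk_smul_tmul' (d : Δ) (x : EMod π) (m : M) :
    (QuotientAddGroup.mk ((d • x) ⊗ₜ[ℤ] m) : CoinvT M π) =
      QuotientAddGroup.mk (x ⊗ₜ[ℤ] (d⁻¹ • m)) := by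
  have := mk_smul_tmul π M d x (d⁻¹ • m)
  rwa [smul_inv_smul] at this

variable {V : Type} [AddCommGroup V]

/-- The forward map: `ψ ↦ (γ ↦ (m ↦ ψ [e(γ) ⊗ m]))`. -/
noncomputable def thetaFun (ψ : CoinvT M π →+ V) (γ : Γ₁) : M →+ V :=
  ψ.comp ((QuotientAddGroup.mk' (coinvKerT M π)).comp
    (TensorProduct.mk ℤ (EMod π) M (eElt π σ hσ γ)).toAddMonoidHom)

lemma thetaFun_apply (ψ : CoinvT M π →+ V) (γ : Γ₁) (m : M) :
    thetaFun π σ hσ M ψ γ m = ψ (QuotientAddGroup.mk (eElt π σ hσ γ ⊗ₜ[ℤ] m)) := rfl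

lemma thetaFun_mem (hE : EActionFormula π σ hσ) (ψ : CoinvT M π →+ V) :
    thetaFun π σ hσ M ψ ∈ ZOneM M π V := by
  intro g h m
  rw [thetaFun_apply, thetaFun_apply, thetaFun_apply, eElt_mul π σ hσ hE g h,
    TensorProduct.add_tmul, QuotientAddGroup.mk_add, map_add]
  congr 1
  rw [mk_smul_tmul' π M (π g) (eElt π σ hσ h) m]

end St6Aux3

section St6Aux4

variable {Γ₁ Δ : Type} [Group Γ₁] [Group Δ]
variable (π : Γ₁ →* Δ) (σ : Δ → Γ₁)
variable (M : Type) [AddCommGroup M] [DistribMulAction Δ M]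
variable {V : Type} [AddCommGroup V]

lemma phi_one {Φ : Γ₁ → (M →+ V)}
    (hΦ : ∀ (g h : Γ₁) (m : M), Φ (g * h) m = Φ g m + Φ h ((π g)⁻¹ • m)) :
    Φ 1 = 0 := by
  ext m
  have := hΦ 1 1 m
  simp only [one_mul, map_one, inv_one, one_smul] at this
  show Φ 1 m = 0
  exact left_eq_add.mp this

/-- Restriction of a cocycle to `ker π`, as a monoid hom into `Multiplicative`. -/
noncomputable def phiKer (Φ : Γ₁ → (M →+ V))
    (hΦ : ∀ (g h : Γ₁) (m : M), Φ (g * h) m = Φ g m + Φ h ((π g)⁻¹ • m)) :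
    ↥π.ker →* Multiplicative (M →+ V) where
  toFun k := Multiplicative.ofAdd (Φ ↑k)
  map_one' := by
    simp [phi_one π M hΦ]
  map_mul' k l := by
    have hk : π ↑k = 1 := k.2
    apply Multiplicative.toAdd.injective
    ext m
    show Φ (↑k * ↑l) m = Φ ↑k m + Φ ↑l m
    rw [hΦ ↑k ↑l m, hk, inv_one, one_smul]

/-- The induced hom on the (additivized) abelianization. -/
noncomputable def phiBar (Φ : Γ₁ → (M →+ V))
    (hΦ : ∀ (g h : Γ₁) (m : M), Φ (g * h) m = Φ g m + Φ h ((π g)⁻¹ • m)) :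
    Additive (Abelianization ↥π.ker) →+ (M →+ V) :=
  MonoidHom.toAdditiveLeft (Abelianization.lift (phiKer π M Φ hΦ))

lemma phiBar_of (Φ : Γ₁ → (M →+ V))
    (hΦ : ∀ (g h : Γ₁) (m : M), Φ (g * h) m = Φ g m + Φ h ((π g)⁻¹ • m))
    (k : ↥π.ker) :
    phiBar π M Φ hΦ (Additive.ofMul (Abelianization.of k)) = Φ ↑k := by
  simp [phiBar, phiKer]

/-- The hom `I_Δ →+ Hom(M,V)`, `c − 1 ↦ Φ(σ c)` (extended linearly). -/
noncomputable def ellHom (Φ : Γ₁ → (M →+ V)) : ↥(augIdeal Δ) →+ (M →+ V) :=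
  (Finsupp.liftAddHom fun c => (zmultiplesHom (M →+ V)) (Φ (σ c))).comp
    (augIdeal Δ).subtype

lemma ellHom_aidElt (Φ : Γ₁ → (M →+ V)) (c : Δ) :
    ellHom σ M Φ (aidElt c) = Φ (σ c) - Φ (σ 1) := by
  simp [ellHom, aidElt, map_sub, Finsupp.liftAddHom_apply_single]

lemma ellHom_aidElt2 (Φ : Γ₁ → (M →+ V)) (a b : Δ) :
    ellHom σ M Φ (aidElt2 a b) = Φ (σ a) - Φ (σ b) := by
  simp [ellHom, aidElt2, map_sub, Finsupp.liftAddHom_apply_single]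

/-- The hom `𝓔 →+ Hom(M,V)` built from a cocycle. -/
noncomputable def eHom (Φ : Γ₁ → (M →+ V))
    (hΦ : ∀ (g h : Γ₁) (m : M), Φ (g * h) m = Φ g m + Φ h ((π g)⁻¹ • m)) :
    EMod π →+ (M →+ V) :=
  (phiBar π M Φ hΦ).comp (AddMonoidHom.fst _ _)
    + (ellHom σ M Φ).comp (AddMonoidHom.snd _ _)

lemma eHom_apply (Φ : Γ₁ → (M →+ V)) (hΦ : ∀ (g h : Γ₁) (m : M),
      Φ (g * h) m = Φ g m + Φ h ((π g)⁻¹ • m)) (x : EMod π) (m : M) :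
    eHom π σ M Φ hΦ x m = phiBar π M Φ hΦ x.1 m + ellHom σ M Φ x.2 m := rfl

/-- The lift `𝓔 ⊗ M →+ V`. -/
noncomputable def tHom (Φ : Γ₁ → (M →+ V))
    (hΦ : ∀ (g h : Γ₁) (m : M), Φ (g * h) m = Φ g m + Φ h ((π g)⁻¹ • m)) :
    TMod M π →+ V :=
  TensorProduct.liftAddHom (eHom π σ M Φ hΦ)
    (fun r x m => by rw [map_zsmul]; simp [AddMonoidHom.map_zsmul])

lemma tHom_tmul (Φ : Γ₁ → (M →+ V))
    (hΦ : ∀ (g h : Γ₁) (m : M), Φ (g * h) m = Φ g m + Φ h ((π g)⁻¹ • m))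
    (x : EMod π) (m : M) :
    tHom π σ M Φ hΦ (x ⊗ₜ[ℤ] m) = eHom π σ M Φ hΦ x m :=
  TensorProduct.liftAddHom_tmul _ _ _ _

end St6Aux4

section St6Aux5

set_option linter.unusedSectionVars false

variable {Γ₁ Δ : Type} [Group Γ₁] [Group Δ]
variable (π : Γ₁ →* Δ) (σ : Δ → Γ₁) (hσ : ∀ c, π (σ c) = c) (hσ1 : σ 1 = 1)
variable [DistribMulAction Δ (EMod π)]
variable (M : Type) [AddCommGroup M] [DistribMulAction Δ M]
variable {V : Type} [AddCommGroup V]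
variable (Φ : Γ₁ → (M →+ V))
variable (hΦ : ∀ (g h : Γ₁) (m : M), Φ (g * h) m = Φ g m + Φ h ((π g)⁻¹ • m))

include hσ hΦ

/-- Conjugation identity for cocycles. -/
lemma phi_conj (d : Δ) (k : ↥π.ker) (m : M) :
    Φ (σ d * ↑k * (σ d)⁻¹) (d • m) = Φ ↑k m := by
  have hk : π ↑k = 1 := k.2
  have hA : Φ (σ d * ↑k) (d • m) = Φ (σ d) (d • m) + Φ ↑k m := by
    rw [hΦ (σ d) ↑k (d • m), hσ d, inv_smul_smul]
  have hB : Φ (σ d * ↑k) (d • m)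
      = Φ (σ d * ↑k * (σ d)⁻¹) (d • m) + Φ (σ d) (d • m) := by
    have hc : σ d * ↑k * (σ d)⁻¹ * σ d = σ d * ↑k := by group
    have h := hΦ (σ d * ↑k * (σ d)⁻¹) (σ d) (d • m)
    rw [hc] at h
    rw [h]
    congr 1
    have hπc : π (σ d * ↑k * (σ d)⁻¹) = 1 := by
      simp [map_mul, hσ, hk]
    rw [hπc, inv_one, one_smul]
  rw [hA, add_comm (Φ (σ d * ↑k * (σ d)⁻¹) (d • m))] at hB
  exact (add_left_cancel hB).symm

lemma phi_kappa (d c : Δ) (m : M) :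
    Φ (σ d * σ c * (σ (d * c))⁻¹) (d • m) + Φ (σ (d * c)) (d • m)
      = Φ (σ d) (d • m) + Φ (σ c) m := by
  have hC : Φ (σ d * σ c) (d • m) = Φ (σ d) (d • m) + Φ (σ c) m := by
    rw [hΦ (σ d) (σ c) (d • m), hσ d, inv_smul_smul]
  have hD : Φ (σ d * σ c) (d • m)
      = Φ (σ d * σ c * (σ (d * c))⁻¹) (d • m) + Φ (σ (d * c)) (d • m) := by
    have hc : σ d * σ c * (σ (d * c))⁻¹ * σ (d * c) = σ d * σ c := by group
    have h := hΦ (σ d * σ c * (σ (d * c))⁻¹) (σ (d * c)) (d • m)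
    rw [hc] at h
    rw [h]
    congr 1
    have hπc : π (σ d * σ c * (σ (d * c))⁻¹) = 1 := by
      rw [map_mul, map_mul, map_inv, hσ, hσ, hσ, mul_inv_cancel]
    rw [hπc, inv_one, one_smul]
  rw [← hC, hD]

lemma phiBar_kappa (d c : Δ) :
    phiBar π M Φ hΦ (Additive.ofMul (kappaE π σ hσ d c))
      = Φ (σ d * σ c * (σ (d * c))⁻¹) :=
  phiBar_of π M Φ hΦ _

lemma phiBar_conj (d : Δ) (k : ↥π.ker) (m : M) :
    phiBar π M Φ hΦ (Additive.ofMul (conjAb π σ d (Abelianization.of k))) (d • m)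
      = Φ ↑k m := by
  rw [conjAb, Abelianization.map_of, phiBar_of]
  have h : (((MulAut.conjNormal (σ d)).toMonoidHom k : ↥π.ker) : Γ₁)
      = σ d * ↑k * (σ d)⁻¹ := MulAut.conjNormal_apply _ _
  rw [h]
  exact phi_conj π σ hσ M Φ hΦ d k m

include hσ1 in
/-- Invariance: `F(d•x)(d•m) = F(x)(m)`. -/
lemma eHom_invariant (hE : EActionFormula π σ hσ) (d : Δ) (x : EMod π) (m : M) :
    eHom π σ M Φ hΦ (d • x) (d • m) = eHom π σ M Φ hΦ x m := by
  revert m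
  have hx : x ∈ (⊤ : AddSubgroup (EMod π)) := AddSubgroup.mem_top x
  rw [← eGens_closure π] at hx
  induction hx using AddSubgroup.closure_induction with
  | mem y hy =>
    obtain ⟨k, c, rfl⟩ := hy
    intro m
    rw [hE d (Abelianization.of k) c, eHom_apply, eHom_apply]
    dsimp only
    rw [ellHom_aidElt2, ellHom_aidElt, hσ1, phi_one π M hΦ, ofMul_mul, map_add,
      AddMonoidHom.add_apply, phiBar_conj π σ hσ M Φ hΦ d k m,
      phiBar_kappa π σ hσ M Φ hΦ d c, phiBar_of]
    simp only [AddMonoidHom.sub_apply, AddMonoidHom.zero_apply, sub_zero]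
    have hk := phi_kappa π σ hσ M Φ hΦ d c m
    have h2 : Φ (σ d * σ c * (σ (d * c))⁻¹) (d • m)
        = Φ (σ d) (d • m) + Φ (σ c) m - Φ (σ (d * c)) (d • m) :=
      eq_sub_of_add_eq hk
    rw [h2]
    abel
  | zero =>
    intro m
    simp
  | add y z _ _ hy hz =>
    intro m
    rw [smul_add, map_add, AddMonoidHom.add_apply, hy m, hz m, map_add]
    rfl
  | neg y _ hy =>
    intro m
    rw [smul_neg, map_neg, AddMonoidHom.neg_apply, hy m, map_neg]
    rfl

end St6Aux5

section St6Aux6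

set_option linter.unusedSectionVars false
set_option maxHeartbeats 1000000

variable {Γ₁ Δ : Type} [Group Γ₁] [Group Δ]
variable (π : Γ₁ →* Δ) (σ : Δ → Γ₁) (hσ : ∀ c, π (σ c) = c) (hσ1 : σ 1 = 1)
variable [DistribMulAction Δ (EMod π)]
variable (M : Type) [AddCommGroup M] [DistribMulAction Δ M]
variable {V : Type} [AddCommGroup V]

lemma zone_spec {Φ : Γ₁ → (M →+ V)} (h : Φ ∈ ZOneM M π V) :
    ∀ (g h : Γ₁) (m : M), Φ (g * h) m = Φ g m + Φ h ((π g)⁻¹ • m) := h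

include hσ1 in
lemma eElt_ker (k : ↥π.ker) :
    eElt π σ hσ (↑k : Γ₁) = (Additive.ofMul (Abelianization.of k), 0) := by
  have hk : π ↑k = 1 := k.2
  apply Prod.ext
  · show Additive.ofMul (Abelianization.of (kerElt π σ hσ ↑k)) = _
    congr 2
    apply Subtype.ext
    show (↑k : Γ₁) * (σ (π ↑k))⁻¹ = ↑k
    rw [hk, hσ1, inv_one, mul_one]
  · show aidElt (π ↑k) = 0
    rw [hk, aidElt_one]

lemma eElt_sigma (c : Δ) :
    eElt π σ hσ (σ c) = (0, aidElt c) := by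
  apply Prod.ext
  · show Additive.ofMul (Abelianization.of (kerElt π σ hσ (σ c))) = 0
    have h1 : kerElt π σ hσ (σ c) = 1 := by
      apply Subtype.ext
      show σ c * (σ (π (σ c)))⁻¹ = 1
      rw [hσ c, mul_inv_cancel]
    rw [h1, map_one, ofMul_one]
  · show aidElt (π (σ c)) = aidElt c
    rw [hσ c]

include hσ1 in
lemma tHom_ker (Φ : Γ₁ → (M →+ V))
    (hΦ : ∀ (g h : Γ₁) (m : M), Φ (g * h) m = Φ g m + Φ h ((π g)⁻¹ • m))
    (hE : EActionFormula π σ hσ) :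
    ∀ x ∈ coinvKerT M π, tHom π σ M Φ hΦ x = 0 := by
  have key : ∀ (d : Δ) (t : TMod M π),
      tHom π σ M Φ hΦ (diagT M π d t) = tHom π σ M Φ hΦ t := by
    intro d t
    induction t using TensorProduct.induction_on with
    | zero => simp
    | tmul x m =>
      rw [diagT]
      erw [TensorProduct.map_tmul]
      rw [tHom_tmul, tHom_tmul]
      exact eHom_invariant π σ hσ hσ1 M Φ hΦ hE d x m
    | add y z hy hz => rw [map_add, map_add, map_add, hy, hz]
  have hle : coinvKerT M π ≤ (tHom π σ M Φ hΦ).ker := by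
    rw [coinvKerT, AddSubgroup.closure_le]
    rintro _ ⟨d, t, rfl⟩
    simp [AddMonoidHom.mem_ker, map_sub, key d t]
  intro x hx
  exact hle hx

/-- The inverse map: `Z¹ → Hom((𝓔⊗M)_Δ, V)`. -/
noncomputable def xiHom (hE : EActionFormula π σ hσ) (b : ↥(ZOneM M π V)) :
    CoinvT M π →+ V := by
  have hker := tHom_ker π σ hσ hσ1 M (b.1) (zone_spec π M b.2) hE
  exact QuotientAddGroup.lift (coinvKerT M π) (tHom π σ M (b.1) (zone_spec π M b.2)) hker

lemma xiHom_mk (hE : EActionFormula π σ hσ) (b : ↥(ZOneM M π V))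
    (t : TMod M π) :
    xiHom π σ hσ hσ1 M hE b (QuotientAddGroup.mk t)
      = tHom π σ M (b.1) (zone_spec π M b.2) t := rfl

/-- The functorial isomorphism. -/
noncomputable def thetaEquiv (hE : EActionFormula π σ hσ) :
    (CoinvT M π →+ V) ≃+ ↥(ZOneM M π V) where
  toFun ψ := ⟨thetaFun π σ hσ M ψ, thetaFun_mem π σ hσ M hE ψ⟩
  invFun b := xiHom π σ hσ hσ1 M hE b
  left_inv ψ := by
    have hΦ := zone_spec π M (thetaFun_mem π σ hσ M hE ψ)
    refine AddMonoidHom.ext fun t => ?_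
    obtain ⟨t, rfl⟩ := QuotientAddGroup.mk_surjective t
    induction t using TensorProduct.induction_on with
    | zero => simp
    | tmul x m =>
      rw [xiHom_mk, tHom_tmul]
      have hx : x ∈ (⊤ : AddSubgroup (EMod π)) := AddSubgroup.mem_top x
      rw [← eGens_closure π] at hx
      revert m
      induction hx using AddSubgroup.closure_induction with
      | mem y hy =>
        obtain ⟨k, c, rfl⟩ := hy
        intro m
        rw [eHom_apply]
        dsimp only
        rw [ellHom_aidElt, hσ1, phi_one π M hΦ, phiBar_of]
        rw [AddMonoidHom.sub_apply, AddMonoidHom.zero_apply, sub_zero]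
        have h1 : thetaFun π σ hσ M ψ (↑k : Γ₁) m
            = ψ (QuotientAddGroup.mk
                (((Additive.ofMul (Abelianization.of k), 0) : EMod π) ⊗ₜ[ℤ] m)) := by
          rw [thetaFun_apply, eElt_ker π σ hσ hσ1]
        have h2 : thetaFun π σ hσ M ψ (σ c) m
            = ψ (QuotientAddGroup.mk (((0, aidElt c) : EMod π) ⊗ₜ[ℤ] m)) := by
          rw [thetaFun_apply, eElt_sigma π σ hσ]
        have h3 : ((Additive.ofMul (Abelianization.of k), 0) : EMod π) + (0, aidElt c)
            = (Additive.ofMul (Abelianization.of k), aidElt c) := by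
          apply Prod.ext <;> simp
        rw [h1, h2, ← map_add, ← QuotientAddGroup.mk_add, ← TensorProduct.add_tmul, h3]
      | zero =>
        intro m
        simp
      | add y z _ _ hy hz =>
        intro m
        rw [map_add, AddMonoidHom.add_apply, hy m, hz m, TensorProduct.add_tmul,
          QuotientAddGroup.mk_add, map_add]
      | neg y _ hy =>
        intro m
        rw [map_neg, AddMonoidHom.neg_apply, hy m, TensorProduct.neg_tmul,
          QuotientAddGroup.mk_neg, map_neg]
    | add y z hy hz =>
      rw [QuotientAddGroup.mk_add, map_add, map_add, hy, hz]
  right_inv b := by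
    have hΦ := zone_spec π M b.2
    apply Subtype.ext
    funext γ
    ext m
    show thetaFun π σ hσ M (xiHom π σ hσ hσ1 M hE b) γ m = (↑b : Γ₁ → (M →+ V)) γ m
    rw [thetaFun_apply, xiHom_mk, tHom_tmul, eHom_apply, eElt]
    dsimp only
    rw [phiBar_of, ellHom_aidElt, hσ1, phi_one π M hΦ]
    rw [AddMonoidHom.sub_apply, AddMonoidHom.zero_apply, sub_zero]
    have hc : (↑(kerElt π σ hσ γ) : Γ₁) * σ (π γ) = γ := by
      show γ * (σ (π γ))⁻¹ * σ (π γ) = γ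
      group
    have h := hΦ (↑(kerElt π σ hσ γ)) (σ (π γ)) m
    rw [hc] at h
    have hπk : π (↑(kerElt π σ hσ γ)) = 1 := (kerElt π σ hσ γ).2
    rw [hπk, inv_one, one_smul] at h
    exact h.symm
  map_add' ψ₁ ψ₂ := by
    apply Subtype.ext
    funext γ
    show thetaFun π σ hσ M (ψ₁ + ψ₂) γ = thetaFun π σ hσ M ψ₁ γ + thetaFun π σ hσ M ψ₂ γ
    ext m
    simp [thetaFun_apply]

end St6Aux6
section Statement6

variable {Γ₁ Δ : Type} [Group Γ₁] [Group Δ]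

theorem statement6
    (π : Γ₁ →* Δ) (hπ : Function.Surjective π)
    (σ : Δ → Γ₁) (hσ : ∀ c, π (σ c) = c) (hσ1 : σ 1 = 1)
    [Fintype Δ]
    [DistribMulAction Δ (EMod π)] (hE : EActionFormula π σ hσ)
    (M : Type) [AddCommGroup M] [DistribMulAction Δ M]
    (q : CoinvT M π →+ M)
    (hq : ∀ (g : Abelianization ↥π.ker) (c : Δ) (m : M),
      q (QuotientAddGroup.mk (((Additive.ofMul g, aidElt c) : EMod π) ⊗ₜ[ℤ] m)) =
        c⁻¹ • m - m) :
    ∃ Θ : ∀ (V : Type) [AddCommGroup V],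
        (CoinvT M π →+ V) ≃+ ↥(ZOneM M π V),
      -- functoriality in V ...
      (∀ (V W : Type) [AddCommGroup V] [AddCommGroup W] (f : V →+ W)
          (ψ : CoinvT M π →+ V) (g : Γ₁) (m : M),
        ((Θ W (f.comp ψ) : Γ₁ → (M →+ W)) g) m =
          f (((Θ V ψ : Γ₁ → (M →+ V)) g) m))
      -- ... and: Θ_V sends (α|_{I_ΔM}) ∘ q to the coboundary γ ↦ γ·α − α:
      ∧ (∀ (V : Type) [AddCommGroup V] (α : M →+ V) (b : ↥(ZOneM M π V)),
          (∀ (γ : Γ₁) (m : M), ((b : Γ₁ → (M →+ V)) γ) m = α ((π γ)⁻¹ • m) - α m) →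
          Θ V (α.comp q) = b) := by
  refine ⟨fun V _ => thetaEquiv π σ hσ hσ1 M hE, ?_, ?_⟩
  · intro V W _ _ f ψ g m
    rfl
  · intro V _ α b hb
    apply Subtype.ext
    funext γ
    ext m
    show thetaFun π σ hσ M (α.comp q) γ m = (↑b : Γ₁ → (M →+ V)) γ m
    rw [thetaFun_apply, hb γ m]
    show α (q (QuotientAddGroup.mk
      (((Additive.ofMul (Abelianization.of (kerElt π σ hσ γ)), aidElt (π γ)) : EMod π)
        ⊗ₜ[ℤ] m))) = _
    rw [hq (Abelianization.of (kerElt π σ hσ γ)) (π γ) m, map_sub]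

end Statement6
end

section
/- With Γ₁, Γ₂, Δ, M, 𝓔 as above, the functor from commutative rings to abelian groups A ↦ Z¹(Γ₁, Hom(M, A^×)) is represented by the group algebra ℤ[(𝓔 ⊗ M)_Δ]: for every commutative ring A there is a bijection, natural in A, between ring homomorphisms ℤ[(𝓔 ⊗ M)_Δ] → A and 1-cocycles Γ₁ → Hom(M, A^×), where Γ₁ acts on the multiplicative group Hom(M, A^×) by (γ·f)(m) = f(π(γ)^{-1}·m). -/
/-!
STATEMENT 10.  The functor A ↦ Z¹(Γ₁, Hom(M, A^×)) on commutative rings is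
represented by the group algebra ℤ[(𝓔 ⊗ M)_Δ]: there is a bijection, natural
in A, between ring homomorphisms ℤ[(𝓔 ⊗ M)_Δ] → A and 1-cocycles
Γ₁ → Hom(M, A^×) (Γ₁ acting by (γ·f)(m) = f(π(γ)⁻¹·m)).
-/

open scoped TensorProduct

section Statement10

variable {Γ₁ Δ : Type} [Group Γ₁] [Group Δ]

/-- Multiplicative 1-cocycles `Γ₁ → Hom(M, A^×)`, written as functions
`Γ₁ → M → Aˣ` which are homomorphisms in `M` and satisfy the cocycle
identity `Φ(gh)(m) = Φ(g)(m) · Φ(h)(π(g)⁻¹•m)`. -/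
def ZOneUnits (M : Type) [AddCommGroup M] [DistribMulAction Δ M]
    (π : Γ₁ →* Δ) (A : Type) [CommRing A] : Type :=
  {Φ : Γ₁ → M → Aˣ //
    (∀ (g : Γ₁) (m m' : M), Φ g (m + m') = Φ g m * Φ g m') ∧
    (∀ (g h : Γ₁) (m : M), Φ (g * h) m = Φ g m * Φ h ((π g)⁻¹ • m))}

namespace S10Aux

open AddSubgroup

variable {Γ₁ Δ : Type} [Group Γ₁] [Group Δ]

/-! ### Layer 1: ring homs from the group algebra vs monoid homs to units -/

open AddMonoidAlgebra in
/-- The unit `χ(single w 1)` of `A`, as a monoid hom in `w`. -/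
noncomputable def singleUnit {W : Type} [AddCommGroup W] {A : Type} [CommRing A]
    (χ : AddMonoidAlgebra ℤ W →+* A) : Multiplicative W →* Aˣ where
  toFun w :=
    { val := χ (single w.toAdd 1)
      inv := χ (single (-w.toAdd) 1)
      val_inv := by rw [← map_mul, single_mul_single]; simp [← AddMonoidAlgebra.one_def]
      inv_val := by rw [← map_mul, single_mul_single]; simp [← AddMonoidAlgebra.one_def] }
  map_one' := by ext; simp [← AddMonoidAlgebra.one_def]
  map_mul' x y := by ext; simp [← map_mul, single_mul_single]

@[simp] lemma singleUnit_coe {W : Type} [AddCommGroup W] {A : Type} [CommRing A]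
    (χ : AddMonoidAlgebra ℤ W →+* A) (w : W) :
    (singleUnit χ (Multiplicative.ofAdd w) : A) = χ (AddMonoidAlgebra.single w 1) := rfl

/-- Ring hom out of the group algebra attached to a monoid hom into units. -/
noncomputable def ringOfUnits {W : Type} [AddCommGroup W] {A : Type} [CommRing A]
    (v : Multiplicative W →* Aˣ) : AddMonoidAlgebra ℤ W →+* A :=
  ((AddMonoidAlgebra.lift ℤ A W) ((Units.coeHom A).comp v)).toRingHom

@[simp] lemma ringOfUnits_single {W : Type} [AddCommGroup W] {A : Type} [CommRing A]
    (v : Multiplicative W →* Aˣ) (w : W) :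
    ringOfUnits v (AddMonoidAlgebra.single w 1) = v (Multiplicative.ofAdd w) := by
  simp [ringOfUnits, AddMonoidAlgebra.lift_single]

lemma singleUnit_ringOfUnits {W : Type} [AddCommGroup W] {A : Type} [CommRing A]
    (v : Multiplicative W →* Aˣ) : singleUnit (ringOfUnits v) = v := by
  refine MonoidHom.ext fun w => Units.ext ?_
  · show (ringOfUnits v (AddMonoidAlgebra.single w.toAdd 1) : A) = _
    simp [ringOfUnits, AddMonoidAlgebra.lift_single]

lemma ringOfUnits_singleUnit {W : Type} [AddCommGroup W] {A : Type} [CommRing A]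
    (χ : AddMonoidAlgebra ℤ W →+* A) : ringOfUnits (singleUnit χ) = χ := by
  apply AddMonoidAlgebra.ringHom_ext
  · intro b
    have h : (AddMonoidAlgebra.single (0:W) b) = b • (1 : AddMonoidAlgebra ℤ W) := by
      rw [AddMonoidAlgebra.one_def, AddMonoidAlgebra.smul_single]; simp
    rw [h, map_zsmul, map_zsmul, map_one, map_one]
  · intro w
    rw [ringOfUnits_single]
    rfl

/-! ### Layer 2: generators of the augmentation ideal and of `EMod` -/

lemma augmentation_single (c : Δ) (b : ℤ) :
    augmentation Δ (Finsupp.single c b) = b := by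
  simp [augmentation, Finsupp.liftAddHom_apply_single]

@[simp] lemma aidElt_one : aidElt (1 : Δ) = 0 := by
  apply Subtype.ext; simp [aidElt]

lemma mem_closure_aidElt (x : ↥(augIdeal Δ)) :
    x ∈ closure (Set.range (aidElt (Δ := Δ))) := by
  set S : AddSubgroup ↥(augIdeal Δ) := closure (Set.range (aidElt (Δ := Δ)))
  set S' : AddSubgroup (Δ →₀ ℤ) := AddSubgroup.map (augIdeal Δ).subtype S
  have key : ∀ f : Δ →₀ ℤ,
      f - (augmentation Δ f) • Finsupp.single (1:Δ) 1 ∈ S' := by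
    intro f
    induction f using Finsupp.induction_linear with
    | zero => simpa using zero_mem S'
    | add f g hf hg =>
        have := add_mem hf hg
        rw [map_add, add_smul] at *
        convert this using 1
        abel
    | single a b =>
        have h1 : (aidElt a : ↥(augIdeal Δ)) ∈ S := AddSubgroup.subset_closure ⟨a, rfl⟩
        have h2 : (b • aidElt a : ↥(augIdeal Δ)) ∈ S := zsmul_mem h1 b
        have h3 : ((b • aidElt a : ↥(augIdeal Δ)) : Δ →₀ ℤ) ∈ S' := ⟨_, h2, rfl⟩
        convert h3 using 1
        rw [augmentation_single]
        show _ = b • ((aidElt a : ↥(augIdeal Δ)) : Δ →₀ ℤ)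
        rw [show ((aidElt a : ↥(augIdeal Δ)) : Δ →₀ ℤ)
            = Finsupp.single a 1 - Finsupp.single 1 1 from rfl]
        rw [smul_sub]
        simp [Finsupp.smul_single]
  have hx0 : augmentation Δ (x : Δ →₀ ℤ) = 0 := x.2
  have := key (x : Δ →₀ ℤ)
  rw [hx0, zero_smul, sub_zero] at this
  obtain ⟨y, hy, hyx⟩ := this
  have : y = x := Subtype.ext hyx
  rwa [this] at hy

/-- Generators of `EMod π`. -/
def EGen (π : Γ₁ →* Δ) : Set (EMod π) :=
  {p | ∃ (k : ↥π.ker) (c : Δ),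
    p = (Additive.ofMul (Abelianization.of k), aidElt c)}

lemma EGen_closure (π : Γ₁ →* Δ) : closure (EGen π) = ⊤ := by
  rw [eq_top_iff]
  rintro ⟨a, x⟩ -
  obtain ⟨k, hk⟩ : ∃ k, Abelianization.of k = a.toMul :=
    Quotient.inductionOn a.toMul fun k => ⟨k, rfl⟩
  have h1 : ((a, 0) : EMod π) ∈ closure (EGen π) := by
    apply AddSubgroup.subset_closure
    exact ⟨k, 1, by rw [aidElt_one]; exact congrArg (fun t => (Additive.ofMul t, 0)) hk.symm⟩
  have h2 : ((0, x) : EMod π) ∈ closure (EGen π) := by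
    have hx := mem_closure_aidElt x
    have : ((0, x) : EMod π) = (AddMonoidHom.inr _ _) x := rfl
    rw [this]
    have hmap := AddMonoidHom.map_closure
      (AddMonoidHom.inr (Additive (Abelianization ↥π.ker)) ↥(augIdeal Δ))
      (Set.range (aidElt (Δ := Δ)))
    have hmem : (AddMonoidHom.inr (Additive (Abelianization ↥π.ker)) ↥(augIdeal Δ)) x
        ∈ AddSubgroup.map (AddMonoidHom.inr _ _) (closure (Set.range (aidElt (Δ := Δ)))) :=
      ⟨x, hx, rfl⟩
    rw [hmap] at hmem
    refine closure_mono ?_ hmem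
    rintro - ⟨-, ⟨c, rfl⟩, rfl⟩
    exact ⟨1, c, by simp⟩
  have : ((a, x) : EMod π) = (a, 0) + (0, x) := by simp
  rw [this]
  exact add_mem h1 h2

/-! ### Layer 3: the canonical elements -/

/-- The `Γ₂`-component `γ·σ(π γ)⁻¹` of `γ`. -/
def kerPart (π : Γ₁ →* Δ) (σ : Δ → Γ₁) (hσ : ∀ c, π (σ c) = c) (γ : Γ₁) : ↥π.ker :=
  ⟨γ * (σ (π γ))⁻¹, by simp [MonoidHom.mem_ker, map_mul, hσ]⟩

variable (π : Γ₁ →* Δ) (σ : Δ → Γ₁) (hσ : ∀ c, π (σ c) = c)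

/-- The canonical element of `𝓔` attached to `γ ∈ Γ₁`. -/
noncomputable def eltE (γ : Γ₁) : EMod π :=
  (Additive.ofMul (Abelianization.of (kerPart π σ hσ γ)), aidElt (π γ))

variable (M : Type) [AddCommGroup M] [DistribMulAction Δ M]

/-- The canonical element of `𝓔 ⊗ M`. -/
noncomputable def eltT (γ : Γ₁) (m : M) : TMod M π := (eltE π σ hσ γ) ⊗ₜ[ℤ] m

variable [DistribMulAction Δ (EMod π)]

/-- The canonical element of `(𝓔 ⊗ M)_Δ`. -/
noncomputable def cElt (γ : Γ₁) (m : M) : CoinvT M π :=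
  QuotientAddGroup.mk (eltT π σ hσ M γ m)

lemma cElt_add (γ : Γ₁) (m m' : M) :
    cElt π σ hσ M γ (m + m') = cElt π σ hσ M γ m + cElt π σ hσ M γ m' := by
  show QuotientAddGroup.mk _ = QuotientAddGroup.mk (_ + _)
  rw [eltT, TensorProduct.tmul_add]
  rfl

/-- Structural identity in `𝓔`: `eltE (g h) = eltE g + (π g) ∗ eltE h`. -/
lemma eltE_mul (hE : EActionFormula π σ hσ) (g h : Γ₁) :
    eltE π σ hσ (g * h) = eltE π σ hσ g + (π g) • eltE π σ hσ h := by
  rw [eltE, eltE, eltE, hE (π g) (Abelianization.of (kerPart π σ hσ h)) (π h)]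
  have hfst : Abelianization.of (kerPart π σ hσ (g * h)) =
      Abelianization.of (kerPart π σ hσ g) *
        (conjAb π σ (π g) (Abelianization.of (kerPart π σ hσ h)) *
          kappaE π σ hσ (π g) (π h)) := by
    rw [conjAb, Abelianization.map_of, kappaE, ← map_mul, ← map_mul]
    congr 1
    apply Subtype.ext
    show (g * h) * (σ (π (g * h)))⁻¹ =
      (g * (σ (π g))⁻¹) * (((MulAut.conjNormal (σ (π g))) (kerPart π σ hσ h) : Γ₁)
        * (σ (π g) * σ (π h) * (σ (π g * π h))⁻¹))
    rw [MulAut.conjNormal_apply]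
    show _ = (g * (σ (π g))⁻¹) *
      ((σ (π g) * (h * (σ (π h))⁻¹) * (σ (π g))⁻¹) * (σ (π g) * σ (π h) * (σ (π g * π h))⁻¹))
    rw [map_mul]
    group
  have hsnd : aidElt (π (g * h)) = aidElt (π g) + aidElt2 (π g * π h) (π g) := by
    apply Subtype.ext
    show Finsupp.single (π (g*h)) 1 - Finsupp.single 1 1 =
      (Finsupp.single (π g) 1 - Finsupp.single 1 1) +
      (Finsupp.single (π g * π h) 1 - Finsupp.single (π g) 1)
    rw [map_mul]
    abel
  rw [Prod.mk_add_mk]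
  refine Prod.ext ?_ hsnd
  show Additive.ofMul _ = Additive.ofMul _ + Additive.ofMul _
  rw [← ofMul_mul]
  exact congrArg Additive.ofMul hfst

/-- Key lemma: the cocycle identity for `cElt`. -/
lemma cElt_mul (hE : EActionFormula π σ hσ) (g h : Γ₁) (m : M) :
    cElt π σ hσ M (g * h) m = cElt π σ hσ M g m + cElt π σ hσ M h ((π g)⁻¹ • m) := by
  set t : TMod M π := eltT π σ hσ M h ((π g)⁻¹ • m) with ht
  have hT : eltT π σ hσ M (g*h) m = eltT π σ hσ M g m + diagT M π (π g) t := by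
    rw [ht, eltT, eltT, eltT, diagT]
    erw [TensorProduct.map_tmul]
    show _ = eltE π σ hσ g ⊗ₜ[ℤ] m + ((π g) • eltE π σ hσ h) ⊗ₜ[ℤ] ((π g) • (π g)⁻¹ • m)
    rw [smul_inv_smul, ← TensorProduct.add_tmul, eltE_mul π σ hσ hE]
  have hker : diagT M π (π g) t - t ∈ coinvKerT M π :=
    AddSubgroup.subset_closure ⟨π g, t, rfl⟩
  show QuotientAddGroup.mk _ = QuotientAddGroup.mk _ + QuotientAddGroup.mk _
  rw [← QuotientAddGroup.mk_add, QuotientAddGroup.eq]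
  rw [hT]
  convert neg_mem hker using 1
  abel


/-! ### Layer 4: from a multiplicative cocycle to an invariant hom on `𝓔 ⊗ M` -/

section Phi

variable {A : Type} [CommRing A] (Φ : Γ₁ → M → Aˣ)

/-- `Φ γ` as an additive hom `M →+ Additive Aˣ`. -/
noncomputable def PhiHom (h1 : ∀ g m m', Φ g (m + m') = Φ g m * Φ g m') (γ : Γ₁) :
    M →+ Additive Aˣ where
  toFun m := Additive.ofMul (Φ γ m)
  map_zero' := by
    have h := h1 γ 0 0
    rw [add_zero] at h
    have h' : Φ γ 0 * 1 = Φ γ 0 * Φ γ 0 := by rw [mul_one]; exact h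
    exact congrArg Additive.ofMul (mul_left_cancel h').symm
  map_add' m m' := congrArg Additive.ofMul (h1 γ m m')

@[simp] lemma PhiHom_apply (h1 : ∀ g m m', Φ g (m + m') = Φ g m * Φ g m') (γ : Γ₁) (m : M) :
    PhiHom M Φ h1 γ m = Additive.ofMul (Φ γ m) := rfl

lemma Phi_one (h2 : ∀ g h m, Φ (g * h) m = Φ g m * Φ h ((π g)⁻¹ • m)) (m : M) :
    Φ 1 m = 1 := by
  have h := h2 1 1 m
  rw [mul_one, map_one, inv_one, one_smul] at h
  have h' : Φ 1 m * 1 = Φ 1 m * Φ 1 m := by rw [mul_one]; exact h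
  exact (mul_left_cancel h').symm

lemma Phi_ker (h2 : ∀ g h m, Φ (g * h) m = Φ g m * Φ h ((π g)⁻¹ • m))
    (x y : Γ₁) (m : M) (hx : π x = 1) :
    Φ (x * y) m = Φ x m * Φ y m := by
  rw [h2, hx, inv_one, one_smul]

/-- `Φ` restricted to the kernel, as a monoid hom to `Multiplicative (M →+ Additive Aˣ)`. -/
noncomputable def LHom (h1 : ∀ g m m', Φ g (m + m') = Φ g m * Φ g m')
    (h2 : ∀ g h m, Φ (g * h) m = Φ g m * Φ h ((π g)⁻¹ • m)) :
    ↥π.ker →* Multiplicative (M →+ Additive Aˣ) where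
  toFun k := Multiplicative.ofAdd (PhiHom M Φ h1 (↑k))
  map_one' := by
    refine congrArg Multiplicative.ofAdd (AddMonoidHom.ext fun m => ?_)
    show Additive.ofMul (Φ ((1 : ↥π.ker) : Γ₁) m) = 0
    rw [OneMemClass.coe_one, Phi_one π M Φ h2]
    rfl
  map_mul' k k' := by
    refine congrArg Multiplicative.ofAdd (AddMonoidHom.ext fun m => ?_)
    show Additive.ofMul (Φ ((↑(k * k') : Γ₁)) m) =
      Additive.ofMul (Φ (↑k) m) + Additive.ofMul (Φ (↑k') m)
    rw [Subgroup.coe_mul, Phi_ker π M Φ h2 _ _ _ (k.2 : π (↑k) = 1)]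
    rfl

/-- `ε₁ : Γ₂^{ab} →+ Hom(M, Aˣ)`. -/
noncomputable def epsOne (h1 : ∀ g m m', Φ g (m + m') = Φ g m * Φ g m')
    (h2 : ∀ g h m, Φ (g * h) m = Φ g m * Φ h ((π g)⁻¹ • m)) :
    Additive (Abelianization ↥π.ker) →+ (M →+ Additive Aˣ) :=
  MonoidHom.toAdditiveLeft (Abelianization.lift (A := Multiplicative (M →+ Additive Aˣ)) (LHom π M Φ h1 h2))

lemma epsOne_of (h1 : ∀ g m m', Φ g (m + m') = Φ g m * Φ g m')
    (h2 : ∀ g h m, Φ (g * h) m = Φ g m * Φ h ((π g)⁻¹ • m)) (k : ↥π.ker) :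
    epsOne π M Φ h1 h2 (Additive.ofMul (Abelianization.of k)) = PhiHom M Φ h1 (↑k) := by
  show Multiplicative.toAdd ((Abelianization.lift (A := Multiplicative (M →+ Additive Aˣ)) (LHom π M Φ h1 h2)) (Abelianization.of k)) = _
  rw [Abelianization.lift_apply_of]
  rfl

/-- `ε₂ : I_Δ →+ Hom(M, Aˣ)`, `c − 1 ↦ Φ(σ c)`. -/
noncomputable def epsTwo (h1 : ∀ g m m', Φ g (m + m') = Φ g m * Φ g m') :
    ↥(augIdeal Δ) →+ (M →+ Additive Aˣ) :=
  (Finsupp.liftAddHom fun c => (zmultiplesHom _) (PhiHom M Φ h1 (σ c))).comp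
    (augIdeal Δ).subtype

lemma epsTwo_aidElt2 (h1 : ∀ g m m', Φ g (m + m') = Φ g m * Φ g m') (a b : Δ) :
    epsTwo σ M Φ h1 (aidElt2 a b) = PhiHom M Φ h1 (σ a) - PhiHom M Φ h1 (σ b) := by
  show (Finsupp.liftAddHom fun c => (zmultiplesHom _) (PhiHom M Φ h1 (σ c)))
      (Finsupp.single a 1 - Finsupp.single b 1) = _
  rw [map_sub, Finsupp.liftAddHom_apply_single, Finsupp.liftAddHom_apply_single]
  simp

lemma epsTwo_aidElt (h1 : ∀ g m m', Φ g (m + m') = Φ g m * Φ g m') (c : Δ) :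
    epsTwo σ M Φ h1 (aidElt c) = PhiHom M Φ h1 (σ c) - PhiHom M Φ h1 (σ 1) :=
  epsTwo_aidElt2 σ M Φ h1 c 1

/-- The full hom `ε : 𝓔 →+ Hom(M, Aˣ)`. -/
noncomputable def epsHom (h1 : ∀ g m m', Φ g (m + m') = Φ g m * Φ g m')
    (h2 : ∀ g h m, Φ (g * h) m = Φ g m * Φ h ((π g)⁻¹ • m)) :
    EMod π →+ (M →+ Additive Aˣ) :=
  (epsOne π M Φ h1 h2).coprod (epsTwo σ M Φ h1)

lemma epsHom_apply (h1 : ∀ g m m', Φ g (m + m') = Φ g m * Φ g m')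
    (h2 : ∀ g h m, Φ (g * h) m = Φ g m * Φ h ((π g)⁻¹ • m)) (p : EMod π) :
    epsHom π σ M Φ h1 h2 p = epsOne π M Φ h1 h2 p.1 + epsTwo σ M Φ h1 p.2 := rfl

lemma PhiHom_sigma_one (hσ1 : σ 1 = 1)
    (h1 : ∀ g m m', Φ g (m + m') = Φ g m * Φ g m')
    (h2 : ∀ g h m, Φ (g * h) m = Φ g m * Φ h ((π g)⁻¹ • m)) :
    PhiHom M Φ h1 (σ 1) = 0 := by
  refine AddMonoidHom.ext fun m => ?_
  show Additive.ofMul (Φ (σ 1) m) = 0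
  rw [hσ1, Phi_one π M Φ h2]
  rfl

lemma epsHom_gen (hσ1 : σ 1 = 1)
    (h1 : ∀ g m m', Φ g (m + m') = Φ g m * Φ g m')
    (h2 : ∀ g h m, Φ (g * h) m = Φ g m * Φ h ((π g)⁻¹ • m)) (k : ↥π.ker) (c : Δ) :
    epsHom π σ M Φ h1 h2 (Additive.ofMul (Abelianization.of k), aidElt c) =
      PhiHom M Φ h1 (↑k) + PhiHom M Φ h1 (σ c) := by
  rw [epsHom_apply, epsOne_of, epsTwo_aidElt, PhiHom_sigma_one π σ M Φ hσ1 h1 h2]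
  abel

lemma epsHom_eltE (hσ1 : σ 1 = 1)
    (h1 : ∀ g m m', Φ g (m + m') = Φ g m * Φ g m')
    (h2 : ∀ g h m, Φ (g * h) m = Φ g m * Φ h ((π g)⁻¹ • m)) (γ : Γ₁) :
    epsHom π σ M Φ h1 h2 (eltE π σ hσ γ) =
      PhiHom M Φ h1 (↑(kerPart π σ hσ γ)) + PhiHom M Φ h1 (σ (π γ)) :=
  epsHom_gen π σ M Φ hσ1 h1 h2 (kerPart π σ hσ γ) (π γ)

/-- The key multiplicative identity used for Δ-invariance. -/
lemma Phi_key (hσ : ∀ c, π (σ c) = c)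
    (h2 : ∀ g h m, Φ (g * h) m = Φ g m * Φ h ((π g)⁻¹ • m))
    (d c : Δ) (k : ↥π.ker) (m : M) :
    Φ ((σ d * ↑k * (σ d)⁻¹) * (σ d * σ c * (σ (d * c))⁻¹)) (d • m) *
        (Φ (σ (d * c)) (d • m) / Φ (σ d) (d • m)) =
      Φ (↑k) m * Φ (σ c) m := by
  set n := d • m with hn
  set u := σ d * ↑k * (σ d)⁻¹ with hu'
  set v := σ d * σ c * (σ (d * c))⁻¹ with hv'
  have hk : π (↑k) = 1 := (k.2 : π (↑k) = 1)
  have hu : π u = 1 := by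
    rw [hu']; simp [map_mul, map_inv, hσ, hk]
  have hv : π v = 1 := by
    rw [hv', map_mul, map_mul, map_inv, hσ, hσ, hσ, mul_inv_cancel]
  have e1 : Φ (u * (v * σ (d * c))) n = Φ u n * (Φ v n * Φ (σ (d * c)) n) := by
    rw [Phi_ker π M Φ h2 _ _ _ hu, Phi_ker π M Φ h2 _ _ _ hv]
  have e2 : u * (v * σ (d * c)) = σ d * (↑k * σ c) := by rw [hu', hv']; group
  have e3 : Φ (σ d * (↑k * σ c)) n = Φ (σ d) n * (Φ (↑k) m * Φ (σ c) m) := by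
    rw [h2, hσ, hn, inv_smul_smul, Phi_ker π M Φ h2 _ _ _ hk]
  have e4 : Φ u n * (Φ v n * Φ (σ (d * c)) n) = Φ (σ d) n * (Φ (↑k) m * Φ (σ c) m) := by
    rw [← e1, e2, e3]
  rw [Phi_ker π M Φ h2 _ _ _ hu, ← mul_div_assoc, div_eq_iff_eq_mul, mul_assoc, e4,
    mul_comm]

end Phi

/-! ### Layer 5: the invariant hom on `𝓔 ⊗ M` and its descent to coinvariants -/

section Theta

variable {A : Type} [CommRing A] (Φ : Γ₁ → M → Aˣ)

/-- Evaluation at `m`, as an additive hom. -/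
noncomputable def evalAt (m : M) : (M →+ Additive Aˣ) →+ Additive Aˣ where
  toFun f := f m
  map_zero' := rfl
  map_add' _ _ := rfl

lemma epsHom_smul (hσ : ∀ c, π (σ c) = c) (hσ1 : σ 1 = 1)
    (h1 : ∀ g m m', Φ g (m + m') = Φ g m * Φ g m')
    (h2 : ∀ g h m, Φ (g * h) m = Φ g m * Φ h ((π g)⁻¹ • m))
    (hE : EActionFormula π σ hσ) (d : Δ) (e : EMod π) (m : M) :
    epsHom π σ M Φ h1 h2 (d • e) (d • m) = epsHom π σ M Φ h1 h2 e m := by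
  set f₁ : EMod π →+ Additive Aˣ :=
    (evalAt M (d • m)).comp ((epsHom π σ M Φ h1 h2).comp
      (DistribMulAction.toAddMonoidHom (EMod π) d)) with hf₁
  set f₂ : EMod π →+ Additive Aˣ := (evalAt M m).comp (epsHom π σ M Φ h1 h2) with hf₂
  have hgen : Set.EqOn f₁ f₂ (EGen π) := by
    rintro p ⟨k, c, rfl⟩
    show epsHom π σ M Φ h1 h2 (d • (Additive.ofMul (Abelianization.of k), aidElt c)) (d • m)
      = epsHom π σ M Φ h1 h2 (Additive.ofMul (Abelianization.of k), aidElt c) m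
    rw [hE d (Abelianization.of k) c, epsHom_gen π σ M Φ hσ1 h1 h2 k c,
      conjAb, Abelianization.map_of, kappaE, ← map_mul, epsHom_apply, epsOne_of,
      epsTwo_aidElt2]
    simp only [AddMonoidHom.add_apply, AddMonoidHom.sub_apply, PhiHom_apply]
    rw [← ofMul_div, ← ofMul_mul, ← ofMul_mul]
    refine congrArg Additive.ofMul ?_
    have hcoe : ((↑((MulAut.conjNormal (σ d)).toMonoidHom k *
        (⟨σ d * σ c * (σ (d * c))⁻¹, by
          have : π (σ d * σ c * (σ (d * c))⁻¹) = 1 := by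
            rw [map_mul, map_mul, map_inv, hσ, hσ, hσ, mul_inv_cancel]
          simpa [MonoidHom.mem_ker] using this⟩ : ↥π.ker))) : Γ₁) =
        (σ d * ↑k * (σ d)⁻¹) * (σ d * σ c * (σ (d * c))⁻¹) := by
      rw [Subgroup.coe_mul]
      congr 1
    rw [hcoe]
    exact Phi_key π σ M Φ hσ h2 d c k m
  have h := AddMonoidHom.eqOn_closure hgen
  rw [EGen_closure] at h
  exact h (AddSubgroup.mem_top e)

/-- The hom `θ : 𝓔 ⊗ M →+ Aˣ` attached to a cocycle. -/
noncomputable def thetaHom (h1 : ∀ g m m', Φ g (m + m') = Φ g m * Φ g m')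
    (h2 : ∀ g h m, Φ (g * h) m = Φ g m * Φ h ((π g)⁻¹ • m)) :
    TMod M π →+ Additive Aˣ :=
  TensorProduct.liftAddHom (epsHom π σ M Φ h1 h2) (by
    intro z e m
    induction z using Int.induction_on with
    | zero => simp
    | succ n ih =>
        rw [show ((n : ℤ) + 1) • e = (n : ℤ) • e + e from by rw [add_smul, one_smul],
          map_add, AddMonoidHom.add_apply, ih,
          show ((n : ℤ) + 1) • m = (n : ℤ) • m + m from by rw [add_smul, one_smul], map_add]
    | pred n ih =>
        rw [show (-(n : ℤ) - 1) • e = (-(n : ℤ)) • e - e from by rw [sub_smul, one_smul],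
          map_sub, AddMonoidHom.sub_apply, ih,
          show (-(n : ℤ) - 1) • m = (-(n : ℤ)) • m - m from by rw [sub_smul, one_smul],
          map_sub])

lemma thetaHom_tmul (h1 : ∀ g m m', Φ g (m + m') = Φ g m * Φ g m')
    (h2 : ∀ g h m, Φ (g * h) m = Φ g m * Φ h ((π g)⁻¹ • m)) (e : EMod π) (m : M) :
    thetaHom π σ M Φ h1 h2 (e ⊗ₜ[ℤ] m) = epsHom π σ M Φ h1 h2 e m :=
  TensorProduct.liftAddHom_tmul _ _ _ _

lemma thetaHom_diag (hσ : ∀ c, π (σ c) = c) (hσ1 : σ 1 = 1)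
    (h1 : ∀ g m m', Φ g (m + m') = Φ g m * Φ g m')
    (h2 : ∀ g h m, Φ (g * h) m = Φ g m * Φ h ((π g)⁻¹ • m))
    (hE : EActionFormula π σ hσ) (d : Δ) (t : TMod M π) :
    thetaHom π σ M Φ h1 h2 (diagT M π d t) = thetaHom π σ M Φ h1 h2 t := by
  induction t using TensorProduct.induction_on with
  | zero => rw [map_zero, map_zero]
  | tmul e m =>
      rw [diagT]
      erw [TensorProduct.map_tmul]
      simp only [AddMonoidHom.coe_toIntLinearMap, DistribMulAction.toAddMonoidHom_apply]
      rw [thetaHom_tmul, thetaHom_tmul]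
      exact epsHom_smul π σ M Φ hσ hσ1 h1 h2 hE d e m
  | add x y ihx ihy => rw [map_add, map_add, map_add, ihx, ihy]

lemma coinvKerT_le_ker (hσ : ∀ c, π (σ c) = c) (hσ1 : σ 1 = 1)
    (h1 : ∀ g m m', Φ g (m + m') = Φ g m * Φ g m')
    (h2 : ∀ g h m, Φ (g * h) m = Φ g m * Φ h ((π g)⁻¹ • m))
    (hE : EActionFormula π σ hσ) :
    coinvKerT M π ≤ (thetaHom π σ M Φ h1 h2).ker := by
  rw [coinvKerT, closure_le]
  rintro x ⟨d, t, rfl⟩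
  show thetaHom π σ M Φ h1 h2 _ = 0
  rw [map_sub, thetaHom_diag π σ M Φ hσ hσ1 h1 h2 hE, sub_self]

/-- The descended monoid hom `(𝓔 ⊗ M)_Δ → Aˣ` attached to a cocycle. -/
noncomputable def vMulHom (hσ : ∀ c, π (σ c) = c) (hσ1 : σ 1 = 1)
    (h1 : ∀ g m m', Φ g (m + m') = Φ g m * Φ g m')
    (h2 : ∀ g h m, Φ (g * h) m = Φ g m * Φ h ((π g)⁻¹ • m))
    (hE : EActionFormula π σ hσ) :
    Multiplicative (CoinvT M π) →* Aˣ :=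
  AddMonoidHom.toMultiplicativeLeft
    (QuotientAddGroup.lift (coinvKerT M π) (thetaHom π σ M Φ h1 h2)
      (coinvKerT_le_ker π σ M Φ hσ hσ1 h1 h2 hE))

lemma vMulHom_mk (hσ : ∀ c, π (σ c) = c) (hσ1 : σ 1 = 1)
    (h1 : ∀ g m m', Φ g (m + m') = Φ g m * Φ g m')
    (h2 : ∀ g h m, Φ (g * h) m = Φ g m * Φ h ((π g)⁻¹ • m))
    (hE : EActionFormula π σ hσ) (t : TMod M π) :
    vMulHom π σ M Φ hσ hσ1 h1 h2 hE
        (Multiplicative.ofAdd ((QuotientAddGroup.mk t : CoinvT M π))) =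
      Additive.toMul (thetaHom π σ M Φ h1 h2 t) := rfl

lemma vMulHom_cElt (hσ : ∀ c, π (σ c) = c) (hσ1 : σ 1 = 1)
    (h1 : ∀ g m m', Φ g (m + m') = Φ g m * Φ g m')
    (h2 : ∀ g h m, Φ (g * h) m = Φ g m * Φ h ((π g)⁻¹ • m))
    (hE : EActionFormula π σ hσ) (γ : Γ₁) (m : M) :
    vMulHom π σ M Φ hσ hσ1 h1 h2 hE (Multiplicative.ofAdd (cElt π σ hσ M γ m)) = Φ γ m := by
  rw [cElt, vMulHom_mk π σ M Φ hσ hσ1 h1 h2 hE, eltT, thetaHom_tmul,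
    epsHom_eltE π σ hσ M Φ hσ1 h1 h2]
  show Φ (↑(kerPart π σ hσ γ)) m * Φ (σ (π γ)) m = Φ γ m
  rw [← Phi_ker π M Φ h2 _ _ m ((kerPart π σ hσ γ).2 : π _ = 1)]
  congr 1
  show γ * (σ (π γ))⁻¹ * σ (π γ) = γ
  group

end Theta

/-! ### Layer 6: the induced cocycle of a ring hom, and the round-trip identities -/

section LeftInv

variable {A : Type} [CommRing A]

lemma kerPart_coe (hσ1 : σ 1 = 1) (k : ↥π.ker) : kerPart π σ hσ (↑k) = k := by
  apply Subtype.ext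
  show (↑k : Γ₁) * (σ (π ↑k))⁻¹ = ↑k
  rw [(k.2 : π (↑k) = 1), hσ1, inv_one, mul_one]

lemma eltE_ker (hσ1 : σ 1 = 1) (k : ↥π.ker) :
    eltE π σ hσ (↑k) = (Additive.ofMul (Abelianization.of k), 0) := by
  rw [eltE, kerPart_coe π σ hσ hσ1 k, (k.2 : π (↑k) = 1), aidElt_one]

lemma eltE_sigma (c : Δ) : eltE π σ hσ (σ c) = (0, aidElt c) := by
  rw [eltE]
  have h1 : kerPart π σ hσ (σ c) = 1 := by
    apply Subtype.ext
    show σ c * (σ (π (σ c)))⁻¹ = 1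
    rw [hσ c]
    group
  rw [h1, hσ c, map_one, ofMul_one]

/-- The cocycle attached to a ring hom `ℤ[(𝓔 ⊗ M)_Δ] → A`. -/
noncomputable def indPhi (χ : AddMonoidAlgebra ℤ (CoinvT M π) →+* A) : Γ₁ → M → Aˣ :=
  fun γ m => singleUnit χ (Multiplicative.ofAdd (cElt π σ hσ M γ m))

lemma indPhi_h1 (χ : AddMonoidAlgebra ℤ (CoinvT M π) →+* A) :
    ∀ g m m', indPhi π σ hσ M χ g (m + m') = indPhi π σ hσ M χ g m * indPhi π σ hσ M χ g m' := by
  intro g m m'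
  show singleUnit χ _ = _
  rw [cElt_add π σ hσ M, ofAdd_add, map_mul]
  rfl

lemma indPhi_h2 (hE : EActionFormula π σ hσ) (χ : AddMonoidAlgebra ℤ (CoinvT M π) →+* A) :
    ∀ g h m, indPhi π σ hσ M χ (g * h) m =
      indPhi π σ hσ M χ g m * indPhi π σ hσ M χ h ((π g)⁻¹ • m) := by
  intro g h m
  show singleUnit χ _ = _
  rw [cElt_mul π σ hσ M hE, ofAdd_add, map_mul]
  rfl

lemma thetaHom_indPhi (hσ1 : σ 1 = 1) (χ : AddMonoidAlgebra ℤ (CoinvT M π) →+* A)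
    (p1 : ∀ g m m', indPhi π σ hσ M χ g (m + m') =
      indPhi π σ hσ M χ g m * indPhi π σ hσ M χ g m')
    (p2 : ∀ g h m, indPhi π σ hσ M χ (g * h) m =
      indPhi π σ hσ M χ g m * indPhi π σ hσ M χ h ((π g)⁻¹ • m))
    (t : TMod M π) :
    thetaHom π σ M (indPhi π σ hσ M χ) p1 p2 t =
      (((AddMonoidHom.toMultiplicativeLeft).symm (singleUnit χ)).comp
        (QuotientAddGroup.mk' (coinvKerT M π))) t := by
  induction t using TensorProduct.induction_on with
  | zero => rw [map_zero, map_zero]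
  | add x y ihx ihy => rw [map_add, map_add, ihx, ihy]
  | tmul e m =>
    rw [thetaHom_tmul]
    set f₁ : EMod π →+ Additive Aˣ :=
      (evalAt M m).comp (epsHom π σ M (indPhi π σ hσ M χ) p1 p2) with hf₁
    set f₂ : EMod π →+ Additive Aˣ :=
      ((((AddMonoidHom.toMultiplicativeLeft).symm (singleUnit χ)).comp
        (QuotientAddGroup.mk' (coinvKerT M π))).comp
          (((TensorProduct.mk ℤ (EMod π) M).flip m).toAddMonoidHom)) with hf₂
    have hgen : Set.EqOn f₁ f₂ (EGen π) := by
      rintro p ⟨k, c, rfl⟩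
      have hsum : cElt π σ hσ M (↑k) m + cElt π σ hσ M (σ c) m =
          (QuotientAddGroup.mk
            (((Additive.ofMul (Abelianization.of k), aidElt c) : EMod π) ⊗ₜ[ℤ] m)
              : CoinvT M π) := by
        rw [cElt, cElt, ← QuotientAddGroup.mk_add, eltT, eltT, eltE_ker π σ hσ hσ1 k,
          eltE_sigma π σ hσ c, ← TensorProduct.add_tmul, Prod.mk_add_mk, add_zero, zero_add]
      show epsHom π σ M (indPhi π σ hσ M χ) p1 p2
          ((Additive.ofMul (Abelianization.of k), aidElt c) : EMod π) m =
        Additive.ofMul (singleUnit χ (Multiplicative.ofAdd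
          (QuotientAddGroup.mk
            (((Additive.ofMul (Abelianization.of k), aidElt c) : EMod π) ⊗ₜ[ℤ] m))))
      rw [epsHom_gen π σ M (indPhi π σ hσ M χ) hσ1 p1 p2 k c]
      rw [AddMonoidHom.add_apply, PhiHom_apply, PhiHom_apply]
      rw [← ofMul_mul]
      refine congrArg Additive.ofMul ?_
      show singleUnit χ (Multiplicative.ofAdd (cElt π σ hσ M (↑k) m)) *
          singleUnit χ (Multiplicative.ofAdd (cElt π σ hσ M (σ c) m)) = _
      rw [← map_mul, ← ofAdd_add, hsum]
    have h := AddMonoidHom.eqOn_closure hgen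
    rw [EGen_closure] at h
    exact h (AddSubgroup.mem_top e)

lemma vMulHom_indPhi (hσ1 : σ 1 = 1) (hE : EActionFormula π σ hσ)
    (χ : AddMonoidAlgebra ℤ (CoinvT M π) →+* A)
    (p1 : ∀ g m m', indPhi π σ hσ M χ g (m + m') =
      indPhi π σ hσ M χ g m * indPhi π σ hσ M χ g m')
    (p2 : ∀ g h m, indPhi π σ hσ M χ (g * h) m =
      indPhi π σ hσ M χ g m * indPhi π σ hσ M χ h ((π g)⁻¹ • m)) :
    vMulHom π σ M (indPhi π σ hσ M χ) hσ hσ1 p1 p2 hE = singleUnit χ := by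
  refine MonoidHom.ext fun w => ?_
  obtain ⟨t, ht⟩ := QuotientAddGroup.mk'_surjective (coinvKerT M π) (Multiplicative.toAdd w)
  have hw : w = Multiplicative.ofAdd (QuotientAddGroup.mk t) :=
    congrArg Multiplicative.ofAdd ht.symm
  rw [hw, vMulHom_mk π σ M (indPhi π σ hσ M χ) hσ hσ1 p1 p2 hE t,
    thetaHom_indPhi π σ hσ M hσ1 χ p1 p2 t]
  rfl

end LeftInv

end S10Aux
theorem statement10
    (π : Γ₁ →* Δ) (hπ : Function.Surjective π)
    (σ : Δ → Γ₁) (hσ : ∀ c, π (σ c) = c) (hσ1 : σ 1 = 1)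
    [Fintype Δ]
    [DistribMulAction Δ (EMod π)] (hE : EActionFormula π σ hσ)
    (M : Type) [AddCommGroup M] [DistribMulAction Δ M] :
    ∃ e : ∀ (A : Type) [CommRing A],
        (AddMonoidAlgebra ℤ (CoinvT M π) →+* A) ≃ ZOneUnits M π A,
      -- naturality in A:
      ∀ (A B : Type) [CommRing A] [CommRing B] (f : A →+* B)
          (χ : AddMonoidAlgebra ℤ (CoinvT M π) →+* A) (g : Γ₁) (m : M),
        ((e B (f.comp χ)).1 g m : B) = f (((e A χ).1 g m : A)) := by
  classical
  refine ⟨fun A _ =>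
    { toFun := fun χ =>
        ⟨S10Aux.indPhi π σ hσ M χ, S10Aux.indPhi_h1 π σ hσ M χ, S10Aux.indPhi_h2 π σ hσ M hE χ⟩
      invFun := fun Φ =>
        S10Aux.ringOfUnits (S10Aux.vMulHom π σ M Φ.1 hσ hσ1 Φ.2.1 Φ.2.2 hE)
      left_inv := fun χ => by
        show S10Aux.ringOfUnits (S10Aux.vMulHom π σ M (S10Aux.indPhi π σ hσ M χ) hσ hσ1
          (S10Aux.indPhi_h1 π σ hσ M χ) (S10Aux.indPhi_h2 π σ hσ M hE χ) hE) = χ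
        rw [S10Aux.vMulHom_indPhi π σ hσ M hσ1 hE χ (S10Aux.indPhi_h1 π σ hσ M χ)
          (S10Aux.indPhi_h2 π σ hσ M hE χ), S10Aux.ringOfUnits_singleUnit]
      right_inv := fun Φ => by
        refine Subtype.ext (funext fun g => funext fun m => ?_)
        show S10Aux.singleUnit
            (S10Aux.ringOfUnits (S10Aux.vMulHom π σ M Φ.1 hσ hσ1 Φ.2.1 Φ.2.2 hE))
            (Multiplicative.ofAdd (S10Aux.cElt π σ hσ M g m)) = Φ.1 g m
        rw [S10Aux.singleUnit_ringOfUnits]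
        exact S10Aux.vMulHom_cElt π σ M Φ.1 hσ hσ1 Φ.2.1 Φ.2.2 hE g m }, ?_⟩
  intro A B _ _ f χ g m
  rfl

end Statement10
end
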